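/- arXiv:1903.03403 — 6 statements merged into one kernel-verified Lean document; each statement's English description precedes it below -/
import Mathlib

section
/- For a bounded linear operator T on a complex Hilbert space H, with P = T*T + TT*, the fourth power of the numerical radius satisfies w(T)^4 ≤ (1/4)w(T²)² + (1/8)w(T²P + PT²) + (1/16)‖P‖². -/
open Complex

variable {H : Type*} [NormedAddCommGroup H] [InnerProductSpace ℂ H] [CompleteSpace H]

/-- The numerical radius `w(T) = sup {|⟨Tx,x⟩| : ‖x‖ = 1}`. -/
noncomputable def numRadius (T : H →L[ℂ] H) : ℝ :=
  sSup {r : ℝ | ∃ x : H, ‖x‖ = 1 ∧ r = ‖(inner ℂ (T x) x : ℂ)‖}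

/-- The Crawford number `m(T) = inf {|⟨Tx,x⟩| : ‖x‖ = 1}`. -/
noncomputable def crawford (T : H →L[ℂ] H) : ℝ :=
  sInf {r : ℝ | ∃ x : H, ‖x‖ = 1 ∧ r = ‖(inner ℂ (T x) x : ℂ)‖}

/-- The real part `Re(T) = (T + T*)/2`. -/
noncomputable def reOp (T : H →L[ℂ] H) : H →L[ℂ] H := (2 : ℂ)⁻¹ • (T + star T)

/-- The imaginary part `Im(T) = (T - T*)/(2i)`. -/
noncomputable def imOp (T : H →L[ℂ] H) : H →L[ℂ] H := (2 * Complex.I)⁻¹ • (T - star T)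

set_option linter.unusedSectionVars false
set_option maxHeartbeats 1000000

section NumRadiusAux

private lemma nr_bdd (T : H →L[ℂ] H) :
    BddAbove {r : ℝ | ∃ x : H, ‖x‖ = 1 ∧ r = ‖(inner ℂ (T x) x : ℂ)‖} := by
  refine ⟨‖T‖, ?_⟩
  rintro r ⟨x, hx, rfl⟩
  calc ‖(inner ℂ (T x) x : ℂ)‖ ≤ ‖T x‖ * ‖x‖ := norm_inner_le_norm _ _
    _ ≤ (‖T‖ * ‖x‖) * ‖x‖ := by gcongr; exact T.le_opNorm x
    _ = ‖T‖ := by rw [hx]; ring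

private lemma inner_le_nr (T : H →L[ℂ] H) {x : H} (hx : ‖x‖ = 1) :
    ‖(inner ℂ (T x) x : ℂ)‖ ≤ numRadius T :=
  le_csSup (nr_bdd T) ⟨x, hx, rfl⟩

private lemma nr_le [Nontrivial H] (T : H →L[ℂ] H) {c : ℝ}
    (h : ∀ x : H, ‖x‖ = 1 → ‖(inner ℂ (T x) x : ℂ)‖ ≤ c) : numRadius T ≤ c := by
  obtain ⟨x₀, hx₀⟩ : ∃ x : H, ‖x‖ = 1 := exists_norm_eq H zero_le_one
  exact csSup_le ⟨_, x₀, hx₀, rfl⟩ (by rintro r ⟨x, hx, rfl⟩; exact h x hx)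

private lemma nr_nonneg [Nontrivial H] (T : H →L[ℂ] H) : 0 ≤ numRadius T := by
  obtain ⟨x₀, hx₀⟩ : ∃ x : H, ‖x‖ = 1 := exists_norm_eq H zero_le_one
  exact le_trans (norm_nonneg _) (inner_le_nr T hx₀)

private lemma inner_le_nr_mul [Nontrivial H] (T : H →L[ℂ] H) (z : H) :
    ‖(inner ℂ (T z) z : ℂ)‖ ≤ numRadius T * ‖z‖ ^ 2 := by
  rcases eq_or_ne z 0 with rfl | hz
  · simp
  · have hnz : ‖z‖ ≠ 0 := norm_ne_zero_iff.mpr hz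
    set u : H := ((‖z‖⁻¹ : ℝ) : ℂ) • z with hu
    have hu1 : ‖u‖ = 1 := by
      rw [hu, norm_smul, Complex.norm_real, Real.norm_eq_abs,
        _root_.abs_of_nonneg (inv_nonneg.mpr (norm_nonneg z))]
      field_simp
    have hz' : z = ((‖z‖ : ℝ) : ℂ) • u := by
      rw [hu, smul_smul, ← Complex.ofReal_mul]
      field_simp
      simp
    have hinner : (inner ℂ (T z) z : ℂ) = (((‖z‖:ℝ) : ℂ))^2 * inner ℂ (T u) u := by
      conv_lhs => rw [hz']
      rw [map_smul, inner_smul_left, inner_smul_right, Complex.conj_ofReal]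
      ring
    rw [hinner, norm_mul, norm_pow, Complex.norm_real, Real.norm_eq_abs,
      _root_.abs_of_nonneg (norm_nonneg z), mul_comm]
    gcongr
    exact inner_le_nr T hu1

private lemma norm_le_nr [Nontrivial H] {S : H →L[ℂ] H} (hS : IsSelfAdjoint S) :
    ‖S‖ ≤ numRadius S := by
  set w := numRadius S with hwdef
  have hw : 0 ≤ w := nr_nonneg S
  have h2 : ∀ u v : H, (inner ℂ (S u) v : ℂ) = (starRingEnd ℂ) (inner ℂ (S v) u) := by
    intro u v
    rw [← hS.adjoint_eq, ContinuousLinearMap.adjoint_inner_left, ← inner_conj_symm, hS.adjoint_eq]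
  have key : ∀ x y : H, re (inner ℂ (S x) y : ℂ) ≤ w / 2 * (‖x‖^2 + ‖y‖^2) := by
    intro x y
    have hb := Complex.add_conj (inner ℂ (S x) y : ℂ)
    push_cast at hb
    have hpol : (inner ℂ (S (x+y)) (x+y) : ℂ) - (inner ℂ (S (x-y)) (x-y) : ℂ)
        = 4 * ((re (inner ℂ (S x) y : ℂ) : ℝ) : ℂ) := by
      simp only [map_add, map_sub, inner_add_left, inner_add_right, inner_sub_left,
        inner_sub_right, h2 y x]
      linear_combination 2 * hb
    have hre2 : re (inner ℂ (S (x+y)) (x+y) : ℂ) - re (inner ℂ (S (x-y)) (x-y) : ℂ)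
        = 4 * re (inner ℂ (S x) y : ℂ) := by
      have := congrArg Complex.re hpol
      simpa using this
    have h3 := inner_le_nr_mul S (x+y)
    have h4 := inner_le_nr_mul S (x-y)
    have e1 : |re (inner ℂ (S (x+y)) (x+y) : ℂ)| ≤ ‖(inner ℂ (S (x+y)) (x+y) : ℂ)‖ :=
      Complex.abs_re_le_norm _
    have e2 : |re (inner ℂ (S (x-y)) (x-y) : ℂ)| ≤ ‖(inner ℂ (S (x-y)) (x-y) : ℂ)‖ :=
      Complex.abs_re_le_norm _
    have hpar : ‖x+y‖^2 + ‖x-y‖^2 = 2*(‖x‖^2 + ‖y‖^2) := by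
      have := parallelogram_law_with_norm ℂ x y
      nlinarith [this]
    have hmul : w * ‖x+y‖^2 + w * ‖x-y‖^2 = w * (2*(‖x‖^2+‖y‖^2)) := by
      rw [← mul_add, hpar]
    have a1 : re (inner ℂ (S (x+y)) (x+y) : ℂ) ≤ w * ‖x+y‖^2 :=
      le_trans (le_trans (le_abs_self _) e1) h3
    have a2 : -re (inner ℂ (S (x-y)) (x-y) : ℂ) ≤ w * ‖x-y‖^2 :=
      le_trans (le_trans (neg_le_abs _) e2) h4
    linarith
  refine S.opNorm_le_bound hw fun x => ?_
  rcases eq_or_ne (S x) 0 with h0 | h0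
  · rw [h0, norm_zero]; positivity
  · have hSx : (0:ℝ) < ‖S x‖ := norm_pos_iff.mpr h0
    have hx0 : x ≠ 0 := by rintro rfl; simp at h0
    have hx : (0:ℝ) < ‖x‖ := norm_pos_iff.mpr hx0
    have hss : (inner ℂ (S x) (S x) : ℂ) = ((‖S x‖^2 : ℝ) : ℂ) := by
      rw [inner_self_eq_norm_sq_to_K]; norm_cast
    have hkey := key x ((((‖x‖ / ‖S x‖ : ℝ)) : ℂ) • S x)
    rw [inner_smul_right, hss, ← Complex.ofReal_mul, Complex.ofReal_re] at hkey
    have hnorm : ‖(((‖x‖ / ‖S x‖ : ℝ)) : ℂ) • S x‖ = ‖x‖ := by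
      rw [norm_smul, Complex.norm_real, Real.norm_eq_abs, _root_.abs_of_nonneg (by positivity)]
      field_simp
    rw [hnorm] at hkey
    have hre : ‖x‖ / ‖S x‖ * ‖S x‖^2 = ‖x‖ * ‖S x‖ := by
      field_simp
    rw [hre] at hkey
    nlinarith [hkey, hx]

/-- For `‖a‖ = 1`, the selfadjoint operator `a • A + conj a • A*` has norm at most `2 w(A)`. -/
private lemma aux_norm_le [Nontrivial H] (A : H →L[ℂ] H) (a : ℂ) (ha : ‖a‖ = 1) :
    ‖a • A + ((starRingEnd ℂ) a) • star A‖ ≤ 2 * numRadius A := by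
  have hsa : IsSelfAdjoint (a • A + ((starRingEnd ℂ) a) • star A) := by
    show star _ = _
    simp only [star_add, star_smul, star_star, Complex.star_def, Complex.conj_conj]
    exact add_comm _ _
  refine le_trans (norm_le_nr hsa) (nr_le _ fun y hy => ?_)
  have hsb : (inner ℂ ((star A) y) y : ℂ) = (starRingEnd ℂ) (inner ℂ (A y) y) := by
    rw [ContinuousLinearMap.star_eq_adjoint, ContinuousLinearMap.adjoint_inner_left,
      ← inner_conj_symm]
  have hval : (inner ℂ ((a • A + ((starRingEnd ℂ) a) • star A) y) y : ℂ)
      = (starRingEnd ℂ) a * (inner ℂ (A y) y)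
        + (starRingEnd ℂ) ((starRingEnd ℂ) a * (inner ℂ (A y) y)) := by
    simp only [ContinuousLinearMap.add_apply, ContinuousLinearMap.smul_apply,
      inner_add_left, inner_smul_left, hsb, map_mul, Complex.conj_conj]
  rw [hval]
  have h1 : ‖(starRingEnd ℂ) a * (inner ℂ (A y) y : ℂ)‖ = ‖(inner ℂ (A y) y : ℂ)‖ := by
    rw [norm_mul, RCLike.norm_conj, ha, one_mul]
  calc ‖_ + _‖ ≤ ‖(starRingEnd ℂ) a * (inner ℂ (A y) y : ℂ)‖
        + ‖(starRingEnd ℂ) ((starRingEnd ℂ) a * (inner ℂ (A y) y : ℂ))‖ := norm_add_le _ _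
    _ = 2 * ‖(inner ℂ (A y) y : ℂ)‖ := by rw [RCLike.norm_conj, h1]; ring
    _ ≤ 2 * numRadius A := by have := inner_le_nr A hy; linarith

end NumRadiusAux

theorem stmt0 (T : H →L[ℂ] H) :
    numRadius T ^ 4 ≤
      (1/4) * numRadius (T ^ 2) ^ 2
        + (1/8) * numRadius (T ^ 2 * (star T * T + T * star T)
            + (star T * T + T * star T) * T ^ 2)
        + (1/16) * ‖star T * T + T * star T‖ ^ 2 := by
  by_cases hH : Nontrivial H
  case neg =>
    have hsub : Subsingleton H := not_nontrivial_iff_subsingleton.mp hH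
    have hzero : ∀ A : H →L[ℂ] H, A = 0 := fun A => by
      ext x; exact Subsingleton.elim _ _
    have hset : ∀ (S : H →L[ℂ] H),
        {r : ℝ | ∃ x : H, ‖x‖ = 1 ∧ r = ‖(inner ℂ (S x) x : ℂ)‖} = (∅ : Set ℝ) := by
      intro S; ext r
      simp only [Set.mem_setOf_eq, Set.mem_empty_iff_false, iff_false, not_exists]
      rintro x ⟨hx, -⟩
      rw [Subsingleton.elim x 0, norm_zero] at hx
      exact one_ne_zero hx.symm
    have hnr : ∀ S : H →L[ℂ] H, numRadius S = 0 := by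
      intro S; rw [numRadius, hset, Real.sSup_empty]
    simp only [hnr]
    rw [hzero (star T * T + T * star T), norm_zero]
    norm_num
  case pos =>
    set P : H →L[ℂ] H := star T * T + T * star T with hP
    set Q : H →L[ℂ] H := T ^ 2 * P + P * T ^ 2 with hQ
    set R : ℝ := (1/4) * numRadius (T ^ 2) ^ 2 + (1/8) * numRadius Q
        + (1/16) * ‖P‖ ^ 2 with hR
    clear_value R
    have hPsa : IsSelfAdjoint P := by
      show star P = P
      simp only [hP, star_add, star_mul, star_star]
    have hQstar : star Q = P * star (T ^ 2) + star (T ^ 2) * P := by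
      simp only [hQ, star_add, star_mul, hPsa.star_eq]
    have hRnn : 0 ≤ R := by
      have h1 := nr_nonneg Q
      have h2 : (0:ℝ) ≤ numRadius (T ^ 2) ^ 2 := sq_nonneg _
      have h3 : (0:ℝ) ≤ ‖P‖ ^ 2 := sq_nonneg _
      rw [hR]; positivity
    have hsqnorm : ∀ {A : H →L[ℂ] H}, IsSelfAdjoint A → ‖A^2‖ = ‖A‖^2 := by
      intro A hA
      calc ‖A^2‖ = ‖star A * A‖ := by rw [hA.star_eq, sq]
        _ = ‖A‖ * ‖A‖ := CStarRing.norm_star_mul_self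
        _ = ‖A‖^2 := (sq ‖A‖).symm
    -- pointwise bound
    have h4 : ∀ x : H, ‖x‖ = 1 → ‖(inner ℂ (T x) x : ℂ)‖ ^ 4 ≤ R := by
      intro x hx
      set α : ℂ := (inner ℂ (T x) x : ℂ) with hα
      obtain ⟨c, hc1, hc2⟩ := RCLike.exists_norm_eq_mul_self α
      set μ : ℂ := (starRingEnd ℂ) c with hμ
      have hμc : (starRingEnd ℂ) μ = c := by rw [hμ, Complex.conj_conj]
      have hμn : ‖μ‖ = 1 := by rw [hμ, RCLike.norm_conj, hc1]
      have hμ1 : μ * (starRingEnd ℂ) μ = 1 := by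
        rw [hμc, hμ, mul_comm, Complex.mul_conj]
        norm_cast
        simp [Complex.normSq_eq_norm_sq, hc1]
      have hμ1' : (starRingEnd ℂ) μ * μ = 1 := by rw [mul_comm]; exact hμ1
      set G : H →L[ℂ] H := μ • T + ((starRingEnd ℂ) μ) • star T with hG
      have hGsa : IsSelfAdjoint G := by
        show star G = G
        simp only [hG, star_add, star_smul, star_star, Complex.star_def, Complex.conj_conj]
        exact add_comm _ _
      have hstarT : (inner ℂ ((star T) x) x : ℂ) = (starRingEnd ℂ) α := by
        rw [ContinuousLinearMap.star_eq_adjoint, ContinuousLinearMap.adjoint_inner_left,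
          ← inner_conj_symm]
      have h1 : (starRingEnd ℂ) μ * α = ((‖α‖ : ℝ) : ℂ) := by
        rw [hμc]; exact_mod_cast hc2.symm
      have h2 : μ * (starRingEnd ℂ) α = ((‖α‖ : ℝ) : ℂ) := by
        have h := congrArg (starRingEnd ℂ) h1
        rw [map_mul, Complex.conj_conj, Complex.conj_ofReal] at h
        exact h
      have hGx : (inner ℂ (G x) x : ℂ) = 2 * ((‖α‖ : ℝ) : ℂ) := by
        simp only [hG, ContinuousLinearMap.add_apply, ContinuousLinearMap.smul_apply,
          inner_add_left, inner_smul_left, hstarT, Complex.conj_conj]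
        rw [h1, h2]
        ring
      have h2α : 2 * ‖α‖ ≤ ‖G‖ := by
        have hcs := norm_inner_le_norm (𝕜 := ℂ) (G x) x
        rw [hGx] at hcs
        have hn2 : ‖(2 : ℂ) * ((‖α‖ : ℝ) : ℂ)‖ = 2 * ‖α‖ := by
          rw [norm_mul, Complex.norm_real, Real.norm_eq_abs,
            _root_.abs_of_nonneg (norm_nonneg _)]
          norm_num
        rw [hn2, hx, mul_one] at hcs
        refine le_trans hcs (le_trans (G.le_opNorm x) ?_)
        rw [hx, mul_one]
      set K : H →L[ℂ] H := (μ^2) • T^2 + ((starRingEnd ℂ) μ)^2 • (star T)^2 with hK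
      have hG2 : G^2 = K + P := by
        rw [sq, hG, add_mul, mul_add, mul_add, smul_mul_smul_comm, smul_mul_smul_comm,
          smul_mul_smul_comm, smul_mul_smul_comm, hμ1, hμ1', one_smul, one_smul, hK, hP]
        simp only [sq]
        abel
      have hμ2 : ‖μ^2‖ = 1 := by rw [norm_pow, hμn]; norm_num
      have hK' : K = (μ^2) • T^2 + ((starRingEnd ℂ) (μ^2)) • star (T^2) := by
        rw [hK, map_pow, star_pow]
      have hKsa : IsSelfAdjoint K := by
        show star K = K
        rw [hK']
        simp only [star_add, star_smul, star_star, Complex.star_def, Complex.conj_conj]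
        rw [← hK', hK, map_pow, star_pow]
        exact add_comm _ _
      have hKbound : ‖K‖ ≤ 2 * numRadius (T^2) := by
        rw [hK']; exact aux_norm_le (T^2) (μ^2) hμ2
      have hKP : K * P + P * K = (μ^2) • Q + ((starRingEnd ℂ) (μ^2)) • star Q := by
        rw [hK', hQstar, hQ]
        simp only [add_mul, mul_add, smul_mul_assoc, mul_smul_comm, smul_add]
        abel
      have hKPbound : ‖K * P + P * K‖ ≤ 2 * numRadius Q := by
        rw [hKP]; exact aux_norm_le Q (μ^2) hμ2
      have hGsq : IsSelfAdjoint (G^2) := hGsa.pow 2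
      have hexp : (G^2)^2 = K^2 + (K*P + P*K) + P^2 := by
        rw [hG2]; noncomm_ring
      have hb1 : ‖(G^2)^2‖ ≤ ‖K‖^2 + ‖K*P + P*K‖ + ‖P‖^2 := by
        rw [hexp]
        refine le_trans (norm_add₃_le) ?_
        rw [hsqnorm hKsa, hsqnorm hPsa]
      have hchain : (2*‖α‖)^4 ≤ ‖K‖^2 + ‖K*P + P*K‖ + ‖P‖^2 := by
        calc (2*‖α‖)^4 ≤ ‖G‖^4 := pow_le_pow_left₀ (by positivity) h2α 4
          _ = (‖G‖^2)^2 := by ring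
          _ = ‖G^2‖^2 := by rw [hsqnorm hGsa]
          _ = ‖(G^2)^2‖ := by rw [hsqnorm hGsq]
          _ ≤ _ := hb1
      have hK2 : ‖K‖^2 ≤ (2*numRadius (T^2))^2 := by
        have h0 := norm_nonneg K
        nlinarith [hKbound]
      have hfin : 16 * ‖α‖^4 ≤ 4*numRadius (T^2)^2 + 2*numRadius Q + ‖P‖^2 := by
        nlinarith [hchain, hK2, hKPbound]
      rw [hR]
      linarith
    have hle : numRadius T ≤ R ^ ((1:ℝ)/4) := by
      refine nr_le T fun x hx => ?_
      have h := h4 x hx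
      have hgr : ‖(inner ℂ (T x) x : ℂ)‖ = (‖(inner ℂ (T x) x : ℂ)‖^4) ^ ((1:ℝ)/4) := by
        rw [← Real.rpow_natCast ‖(inner ℂ (T x) x : ℂ)‖ 4, ← Real.rpow_mul (norm_nonneg _)]
        norm_num
      rw [hgr]
      exact Real.rpow_le_rpow (by positivity) h (by norm_num)
    calc numRadius T ^ 4 ≤ (R ^ ((1:ℝ)/4))^4 := pow_le_pow_left₀ (nr_nonneg T) hle 4
      _ = R := by
        rw [← Real.rpow_natCast (R ^ ((1:ℝ)/4)) 4, ← Real.rpow_mul hRnn]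
        norm_num
end

section
/- For a bounded linear operator T on a complex Hilbert space H, w(T)³ ≤ (1/4)w(T³) + (1/4)w(T²T* + T*T² + TT*T). -/
open Complex ComplexConjugate

variable {H : Type*} [NormedAddCommGroup H] [InnerProductSpace ℂ H] [CompleteSpace H]

namespace Wcube

lemma numSet_bdd (T : H →L[ℂ] H) :
    BddAbove {r : ℝ | ∃ x : H, ‖x‖ = 1 ∧ r = ‖(inner ℂ (T x) x : ℂ)‖} := by
  refine ⟨‖T‖, ?_⟩
  rintro r ⟨x, hx, rfl⟩
  calc ‖(inner ℂ (T x) x : ℂ)‖ ≤ ‖T x‖ * ‖x‖ := norm_inner_le_norm _ _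
    _ ≤ ‖T‖ * ‖x‖ * ‖x‖ := by
        gcongr
        exact T.le_opNorm x
    _ = ‖T‖ := by rw [hx]; ring

lemma numRadius_nonneg (T : H →L[ℂ] H) : 0 ≤ numRadius T :=
  Real.sSup_nonneg (by rintro r ⟨x, hx, rfl⟩; positivity)

lemma inner_le_numRadius (T : H →L[ℂ] H) {x : H} (hx : ‖x‖ = 1) :
    ‖(inner ℂ (T x) x : ℂ)‖ ≤ numRadius T :=
  le_csSup (numSet_bdd T) ⟨x, hx, rfl⟩

lemma inner_le_numRadius_sq (T : H →L[ℂ] H) (z : H) :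
    ‖(inner ℂ (T z) z : ℂ)‖ ≤ numRadius T * ‖z‖ ^ 2 := by
  rcases eq_or_ne z 0 with rfl | hz
  · simp
  · have hz' : ‖z‖ ≠ 0 := norm_ne_zero_iff.2 hz
    have hzpos : (0:ℝ) < ‖z‖ := (norm_nonneg z).lt_of_ne' hz'
    set c : ℂ := ((‖z‖ : ℂ))⁻¹ with hc
    have hcn : ‖c‖ = ‖z‖⁻¹ := by
      rw [hc, norm_inv, Complex.norm_real, Real.norm_eq_abs, abs_of_pos hzpos]
    have hy : ‖c • z‖ = 1 := by
      rw [norm_smul, hcn, inv_mul_cancel₀ hz']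
    have h1 := inner_le_numRadius T hy
    have h2 : (inner ℂ (T (c • z)) (c • z) : ℂ) = conj c * (c * inner ℂ (T z) z) := by
      rw [map_smul, inner_smul_left, inner_smul_right]
    rw [h2] at h1
    have h3 : ‖conj c * (c * (inner ℂ (T z) z : ℂ))‖ = ‖z‖⁻¹ * ‖z‖⁻¹ * ‖(inner ℂ (T z) z : ℂ)‖ := by
      rw [norm_mul, norm_mul, RCLike.norm_conj, hcn]; ring
    rw [h3] at h1
    have := mul_le_mul_of_nonneg_left h1 (le_of_lt (mul_pos hzpos hzpos))
    calc ‖(inner ℂ (T z) z : ℂ)‖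
        = ‖z‖ * ‖z‖ * (‖z‖⁻¹ * ‖z‖⁻¹ * ‖(inner ℂ (T z) z : ℂ)‖) := by
          field_simp
      _ ≤ ‖z‖ * ‖z‖ * numRadius T := this
      _ = numRadius T * ‖z‖ ^ 2 := by ring

lemma selfadj_norm_le {A : H →L[ℂ] H} (hA : IsSelfAdjoint A) {C : ℝ} (hC : 0 ≤ C)
    (h : ∀ z : H, ‖(inner ℂ (A z) z : ℂ)‖ ≤ C * ‖z‖ ^ 2) : ‖A‖ ≤ C := by
  have hsym := hA.isSymmetric
  have key : ∀ x y : H, ‖x‖ = 1 → ‖y‖ = 1 → ((inner ℂ (A x) y : ℂ)).re ≤ C := by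
    intro x y hx hy
    have e1 : (inner ℂ (A (x+y)) (x+y) : ℂ) - inner ℂ (A (x-y)) (x-y)
        = 2 * (inner ℂ (A x) y + inner ℂ (A y) x) := by
      simp only [map_add, map_sub, inner_add_left, inner_add_right,
        inner_sub_left, inner_sub_right]
      ring
    have hyx : (inner ℂ (A y) x : ℂ) = conj (inner ℂ (A x) y : ℂ) := by
      rw [show (inner ℂ (A y) x : ℂ) = inner ℂ y (A x) from hsym y x, ← inner_conj_symm]
    have e2 : (inner ℂ (A (x+y)) (x+y) : ℂ) - inner ℂ (A (x-y)) (x-y)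
        = ((4 * ((inner ℂ (A x) y : ℂ)).re : ℝ) : ℂ) := by
      rw [e1, hyx, Complex.add_conj]
      push_cast
      ring
    have hnorm : ‖(inner ℂ (A (x+y)) (x+y) : ℂ) - inner ℂ (A (x-y)) (x-y)‖ ≤ 4 * C := by
      calc ‖(inner ℂ (A (x+y)) (x+y) : ℂ) - inner ℂ (A (x-y)) (x-y)‖
          ≤ ‖(inner ℂ (A (x+y)) (x+y) : ℂ)‖ + ‖(inner ℂ (A (x-y)) (x-y) : ℂ)‖ := norm_sub_le _ _
        _ ≤ C * ‖x+y‖^2 + C * ‖x-y‖^2 := add_le_add (h _) (h _)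
        _ = C * (‖x+y‖ * ‖x+y‖ + ‖x-y‖ * ‖x-y‖) := by ring
        _ = C * (2 * (‖x‖*‖x‖ + ‖y‖*‖y‖)) := by
            have hpl := parallelogram_law_with_norm ℂ x y
            rw [sq, sq, sq, sq] at hpl
            rw [hpl]
        _ = 4 * C := by rw [hx, hy]; ring
    rw [e2] at hnorm
    rw [Complex.norm_real, Real.norm_eq_abs] at hnorm
    have := (abs_le.1 hnorm).2
    linarith
  have key2 : ∀ x : H, ‖x‖ = 1 → ‖A x‖ ≤ C := by
    intro x hx
    rcases eq_or_ne (A x) 0 with hAx | hAx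
    · simp [hAx, hC]
    · have hAxn : ‖A x‖ ≠ 0 := norm_ne_zero_iff.2 hAx
      have hAxpos : (0:ℝ) < ‖A x‖ := (norm_nonneg _).lt_of_ne' hAxn
      set y : H := ((‖A x‖ : ℂ))⁻¹ • A x with hy
      have hyn : ‖y‖ = 1 := by
        rw [hy, norm_smul, norm_inv, Complex.norm_real, Real.norm_eq_abs,
          abs_of_pos hAxpos, inv_mul_cancel₀ hAxn]
      have := key x y hx hyn
      have e : (inner ℂ (A x) y : ℂ) = ((‖A x‖ : ℝ) : ℂ) := by
        rw [hy, inner_smul_right, inner_self_eq_norm_sq_to_K]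
        rw [sq]
        field_simp
        exact div_eq_of_eq_mul (by exact_mod_cast hAxn) (by simp [sq])
      rw [e] at this
      simpa using this
  refine A.opNorm_le_bound hC ?_
  intro x
  rcases eq_or_ne x 0 with rfl | hx
  · simp
  · have hxn : ‖x‖ ≠ 0 := norm_ne_zero_iff.2 hx
    have hxpos : (0:ℝ) < ‖x‖ := (norm_nonneg _).lt_of_ne' hxn
    have hu : ‖((‖x‖ : ℂ))⁻¹ • x‖ = 1 := by
      rw [norm_smul, norm_inv, Complex.norm_real, Real.norm_eq_abs,
        abs_of_pos hxpos, inv_mul_cancel₀ hxn]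
    have := key2 _ hu
    rw [map_smul, norm_smul, norm_inv, Complex.norm_real, Real.norm_eq_abs,
      abs_of_pos hxpos] at this
    calc ‖A x‖ = ‖x‖ * (‖x‖⁻¹ * ‖A x‖) := by field_simp
      _ ≤ ‖x‖ * C := by
          exact mul_le_mul_of_nonneg_left this (le_of_lt hxpos)
      _ = C * ‖x‖ := by ring

lemma selfadj_cube_norm {A : H →L[ℂ] H} (hA : IsSelfAdjoint A) :
    ‖A‖ ^ 3 ≤ ‖A ^ 3‖ := by
  have h4 : ‖A ^ 4‖ = ‖A‖ ^ 4 := by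
    have h := hA.nnnorm_pow_two_pow 2
    have h' := congrArg (fun t : NNReal => (t : ℝ)) h
    norm_num at h'
    simpa using h'
  rcases eq_or_ne ‖A‖ 0 with h0 | h0
  · have hz : A = 0 := norm_eq_zero.1 h0
    simp [hz]
  · have hpos : (0:ℝ) < ‖A‖ := (norm_nonneg _).lt_of_ne' h0
    have h5 : ‖A‖ ^ 4 ≤ ‖A ^ 3‖ * ‖A‖ := by
      calc ‖A‖ ^ 4 = ‖A ^ 4‖ := h4.symm
        _ = ‖A ^ 3 * A‖ := by rw [← pow_succ]
        _ ≤ ‖A ^ 3‖ * ‖A‖ := norm_mul_le _ _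
    have h6 : ‖A‖ ^ 3 * ‖A‖ ≤ ‖A ^ 3‖ * ‖A‖ := by
      calc ‖A‖ ^ 3 * ‖A‖ = ‖A‖ ^ 4 := by ring
        _ ≤ ‖A ^ 3‖ * ‖A‖ := h5
    exact le_of_mul_le_mul_right h6 hpos

lemma reMul_selfAdjoint (A : H →L[ℂ] H) (u : ℂ) :
    IsSelfAdjoint ((2:ℂ)⁻¹ • (u • A + conj u • star A)) := by
  rw [IsSelfAdjoint]
  simp only [star_smul, star_add, star_star, RCLike.star_def, map_inv₀, map_ofNat, Complex.conj_conj]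
  rw [add_comm]

lemma reMul_inner (A : H →L[ℂ] H) (u : ℂ) (z : H) :
    (inner ℂ (((2:ℂ)⁻¹ • (u • A + conj u • star A)) z) z : ℂ)
      = 2⁻¹ * (conj u * inner ℂ (A z) z + u * conj (inner ℂ (A z) z : ℂ)) := by
  have hstar : (inner ℂ ((star A) z) z : ℂ) = conj (inner ℂ (A z) z : ℂ) := by
    rw [ContinuousLinearMap.star_eq_adjoint, ContinuousLinearMap.adjoint_inner_left,
      ← inner_conj_symm]
  simp only [ContinuousLinearMap.smul_apply, ContinuousLinearMap.add_apply,
    inner_smul_left, inner_add_left, hstar, map_inv₀, map_ofNat, Complex.conj_conj]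

lemma reMul_norm_le (A : H →L[ℂ] H) {u : ℂ} (hu : ‖u‖ = 1) :
    ‖(2:ℂ)⁻¹ • (u • A + conj u • star A)‖ ≤ numRadius A := by
  refine selfadj_norm_le (reMul_selfAdjoint A u) (numRadius_nonneg A) (fun z => ?_)
  rw [reMul_inner]
  calc ‖(2⁻¹ : ℂ) * (conj u * inner ℂ (A z) z + u * conj (inner ℂ (A z) z : ℂ))‖
      ≤ ‖(2⁻¹:ℂ)‖ * (‖conj u * (inner ℂ (A z) z : ℂ)‖ + ‖u * conj (inner ℂ (A z) z : ℂ)‖) := by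
        rw [norm_mul]
        gcongr
        exact norm_add_le _ _
    _ = ‖(inner ℂ (A z) z : ℂ)‖ := by
        rw [norm_mul, norm_mul, RCLike.norm_conj, RCLike.norm_conj, hu]
        have : ‖(2⁻¹ : ℂ)‖ = 2⁻¹ := by norm_num
        rw [this]
        ring
    _ ≤ numRadius A * ‖z‖ ^ 2 := inner_le_numRadius_sq A z

lemma expand_cube (u v : ℂ) (A : H →L[ℂ] H) :
    (u • A + v • star A) ^ 3 =
      u ^ 3 • A ^ 3 + v ^ 3 • star A ^ 3
        + (u ^ 2 * v) • (A ^ 2 * star A + star A * A ^ 2 + A * star A * A)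
        + (u * v ^ 2) • (star A ^ 2 * A + A * star A ^ 2 + star A * A * star A) := by
  simp only [pow_succ, pow_zero, one_mul, add_mul, mul_add, smul_mul_assoc,
    mul_smul_comm, smul_smul, smul_add, mul_assoc]
  module

end Wcube

open Wcube in
theorem stmt1 (T : H →L[ℂ] H) :
    numRadius T ^ 3 ≤
      (1/4) * numRadius (T ^ 3)
        + (1/4) * numRadius (T ^ 2 * star T + star T * T ^ 2 + T * star T * T) := by
  set D : H →L[ℂ] H := T ^ 2 * star T + star T * T ^ 2 + T * star T * T with hDdef
  set M : ℝ := (1/4) * numRadius (T ^ 3) + (1/4) * numRadius D with hMdef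
  have hM : 0 ≤ M := by
    have h1 := numRadius_nonneg (T ^ 3)
    have h2 := numRadius_nonneg D
    rw [hMdef]; linarith
  have key : ∀ x : H, ‖x‖ = 1 → ‖(inner ℂ (T x) x : ℂ)‖ ^ 3 ≤ M := by
    intro x hx
    set β : ℂ := (inner ℂ (T x) x : ℂ) with hβdef
    rcases eq_or_ne β 0 with hβ | hβ
    · rw [hβ]; simpa using hM
    · have hβn : ‖β‖ ≠ 0 := norm_ne_zero_iff.2 hβ
      have hβpos : (0:ℝ) < ‖β‖ := (norm_nonneg _).lt_of_ne' hβn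
      set u : ℂ := β / (‖β‖ : ℂ) with hudef
      have hβcn : ‖((‖β‖:ℝ) : ℂ)‖ = ‖β‖ := by
        rw [Complex.norm_real, Real.norm_eq_abs, abs_of_pos hβpos]
      have hu : ‖u‖ = 1 := by
        rw [hudef, norm_div, hβcn, div_self hβn]
      have huv : u * conj u = 1 := by
        rw [RCLike.mul_conj, hu]; norm_num
      set B : H →L[ℂ] H := (2:ℂ)⁻¹ • (u • T + conj u • star T) with hBdef
      have hBx : (inner ℂ (B x) x : ℂ) = ((‖β‖ : ℝ) : ℂ) := by
        rw [hBdef, reMul_inner, ← hβdef]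
        have h1 : conj u * β = ((‖β‖:ℝ):ℂ) := by
          rw [hudef, map_div₀, Complex.conj_ofReal, div_mul_eq_mul_div, RCLike.conj_mul]
          rw [sq]
          field_simp
          exact div_eq_of_eq_mul (by exact_mod_cast hβn) (by simp [sq])
        have h2 : u * conj β = ((‖β‖:ℝ):ℂ) := by
          rw [hudef, div_mul_eq_mul_div, RCLike.mul_conj]
          rw [sq]
          field_simp
          exact div_eq_of_eq_mul (by exact_mod_cast hβn) (by simp [sq])
        rw [h1, h2]
        ring
      have hβB : ‖β‖ ≤ ‖B‖ := by
        calc ‖β‖ = ‖(inner ℂ (B x) x : ℂ)‖ := by rw [hBx, hβcn]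
          _ ≤ ‖B x‖ * ‖x‖ := norm_inner_le_norm _ _
          _ ≤ ‖B‖ * ‖x‖ * ‖x‖ := by
              gcongr
              exact B.le_opNorm x
          _ = ‖B‖ := by rw [hx]; ring
      set B₁ : H →L[ℂ] H := (2:ℂ)⁻¹ • ((u^3) • T^3 + conj (u^3) • star (T^3)) with hB1
      set B₂ : H →L[ℂ] H := (2:ℂ)⁻¹ • (u • D + conj u • star D) with hB2
      have hcube : B ^ 3 = (4:ℂ)⁻¹ • B₁ + (4:ℂ)⁻¹ • B₂ := by
        rw [hBdef, smul_pow, expand_cube u (conj u) T]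
        have h2 : u ^ 2 * conj u = u := by
          rw [sq, mul_assoc, huv, mul_one]
        have h3 : u * conj u ^ 2 = conj u := by
          rw [sq, ← mul_assoc, huv, one_mul]
        have hDstar : star D = star T ^ 2 * T + T * star T ^ 2 + star T * T * star T := by
          rw [hDdef]
          simp only [star_add, star_mul, star_star, star_pow]
          abel
        rw [h2, h3, hB1, hB2, ← hDstar, map_pow, star_pow, ← hDdef]
        module
      have hB1n : ‖B₁‖ ≤ numRadius (T ^ 3) := by
        rw [hB1]
        exact reMul_norm_le (T ^ 3) (by rw [norm_pow, hu]; norm_num)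
      have hB2n : ‖B₂‖ ≤ numRadius D := reMul_norm_le D hu
      have hB3 : ‖B ^ 3‖ ≤ M := by
        calc ‖B ^ 3‖ = ‖(4:ℂ)⁻¹ • B₁ + (4:ℂ)⁻¹ • B₂‖ := by rw [hcube]
          _ ≤ ‖(4:ℂ)⁻¹ • B₁‖ + ‖(4:ℂ)⁻¹ • B₂‖ := norm_add_le _ _
          _ = (1/4) * ‖B₁‖ + (1/4) * ‖B₂‖ := by
              have e : ∀ X : H →L[ℂ] H, ‖(4:ℂ)⁻¹ • X‖ = (1/4) * ‖X‖ := by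
                intro X
                rw [norm_smul, norm_inv]
                norm_num
              rw [e B₁, e B₂]
          _ ≤ M := by
              rw [hMdef]
              gcongr
      calc ‖β‖ ^ 3 ≤ ‖B‖ ^ 3 := by gcongr
        _ ≤ ‖B ^ 3‖ := selfadj_cube_norm (reMul_selfAdjoint T u)
        _ ≤ M := hB3
  rcases Set.eq_empty_or_nonempty
      {r : ℝ | ∃ x : H, ‖x‖ = 1 ∧ r = ‖(inner ℂ (T x) x : ℂ)‖} with he | hne
  · rw [numRadius, he, Real.sSup_empty]
    simpa using hM
  · have hle : numRadius T ≤ M ^ ((3:ℝ)⁻¹) := by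
      refine csSup_le hne ?_
      rintro r ⟨x, hx, rfl⟩
      have hr : (0:ℝ) ≤ ‖(inner ℂ (T x) x : ℂ)‖ := norm_nonneg _
      have h1 : (‖(inner ℂ (T x) x : ℂ)‖ ^ 3) ^ ((3:ℝ)⁻¹) ≤ M ^ ((3:ℝ)⁻¹) :=
        Real.rpow_le_rpow (by positivity) (key x hx) (by norm_num)
      calc ‖(inner ℂ (T x) x : ℂ)‖
          = (‖(inner ℂ (T x) x : ℂ)‖ ^ 3) ^ ((3:ℝ)⁻¹) := by
            rw [← Real.rpow_natCast ‖(inner ℂ (T x) x : ℂ)‖ 3, ← Real.rpow_mul hr]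
            norm_num
        _ ≤ M ^ ((3:ℝ)⁻¹) := h1
    have hfin : numRadius T ^ 3 ≤ (M ^ ((3:ℝ)⁻¹)) ^ 3 := by
      gcongr
      exact numRadius_nonneg T
    calc numRadius T ^ 3 ≤ (M ^ ((3:ℝ)⁻¹)) ^ 3 := hfin
      _ = M := by
          rw [← Real.rpow_natCast (M ^ ((3:ℝ)⁻¹)) 3, ← Real.rpow_mul hM]
          norm_num
end

section
/- For a bounded linear operator T on a complex Hilbert space and any real number r ≥ 1, w(T)^{2r} ≤ (1/2)w(T²)^r + (1/4)‖(T*T)^r + (TT*)^r‖. -/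
open Complex

variable {H : Type*} [NormedAddCommGroup H] [InnerProductSpace ℂ H] [CompleteSpace H]

open scoped NNReal

/-! ### Scalar helper lemmas -/

/-- Two-point convexity of `rpow` for nonnegative reals, with weights `1/2, 1/2`. -/
lemma half_half_rpow_le {u v : ℝ} (hu : 0 ≤ u) (hv : 0 ≤ v) {p : ℝ} (hp : 1 ≤ p) :
    ((1/2) * u + (1/2) * v) ^ p ≤ (1/2) * u ^ p + (1/2) * v ^ p := by
  lift u to ℝ≥0 using hu
  lift v to ℝ≥0 using hv
  have h := NNReal.rpow_arith_mean_le_arith_mean2_rpow (1/2) (1/2) u v (add_halves 1) hp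
  have := (NNReal.coe_le_coe).mpr h
  push_cast at this ⊢
  convert this using 2 <;> norm_num

lemma young_aux {t μ r q : ℝ} (ht : 0 ≤ t) (hμ : 0 < μ) (hpq : r.HolderConjugate q) :
    t ≤ μ ^ r * t ^ r / r + μ ^ (-q) / q := by
  have h := Real.young_inequality_of_nonneg (mul_nonneg hμ.le ht)
    (inv_nonneg.mpr hμ.le) hpq
  have h1 : μ * t * μ⁻¹ = t := by field_simp
  have h2 : (μ * t) ^ r = μ ^ r * t ^ r := Real.mul_rpow hμ.le ht
  have h3 : (μ⁻¹) ^ q = μ ^ (-q) := by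
    rw [Real.inv_rpow hμ.le, Real.rpow_neg hμ.le]
  rw [h1, h2, h3] at h
  exact h

/-! ### Inner product / operator order helpers -/

lemma re_inner_nonneg_of_nonneg {A : H →L[ℂ] H} (hA : 0 ≤ A) (x : H) :
    0 ≤ Complex.re (inner ℂ (A x) x : ℂ) := by
  have := ((ContinuousLinearMap.nonneg_iff_isPositive A).mp hA).inner_nonneg_left x
  simpa using (RCLike.nonneg_iff.mp this).1

lemma re_inner_le_of_le {M N : H →L[ℂ] H} (h : M ≤ N) (x : H) :
    Complex.re (inner ℂ (M x) x : ℂ) ≤ Complex.re (inner ℂ (N x) x : ℂ) := by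
  have h0 : 0 ≤ N - M := sub_nonneg.mpr h
  have := re_inner_nonneg_of_nonneg h0 x
  simp only [ContinuousLinearMap.sub_apply, inner_sub_left, Complex.sub_re] at this
  linarith

/-- `CFC.rpow` as a real continuous functional calculus. -/
lemma rpow_eq_real_cfc {A : H →L[ℂ] H} (hA : 0 ≤ A) (r : ℝ) :
    CFC.rpow A r = cfc (fun t : ℝ => t ^ r) A := by
  rw [show CFC.rpow A r = cfc (fun t : ℝ≥0 => t ^ r) A from rfl, cfc_nnreal_eq_real (ha := hA)]
  refine cfc_congr fun t ht => ?_
  have ht' : 0 ≤ t := spectrum_nonneg_of_nonneg hA ht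
  simp [NNReal.coe_rpow, Real.coe_toNNReal _ ht']

/-- McCarthy's inequality: for `A ≥ 0`, `r ≥ 1` and a unit vector `x`,
`⟨Ax,x⟩ ^ r ≤ ⟨A^r x, x⟩`. -/
lemma mccarthy {A : H →L[ℂ] H} (hA : 0 ≤ A) {r : ℝ} (hr : 1 ≤ r) {x : H}
    (hx : ‖x‖ = 1) :
    Complex.re (inner ℂ (A x) x : ℂ) ^ r ≤ Complex.re (inner ℂ (CFC.rpow A r x) x : ℂ) := by
  have hsa : IsSelfAdjoint A := .of_nonneg hA
  rcases eq_or_lt_of_le hr with heq | hr1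
  · rw [← heq, show CFC.rpow A (1:ℝ) = A from CFC.rpow_one A hA, Real.rpow_one]
  have hr0 : (0:ℝ) < r := by linarith
  set q := r / (r - 1) with hqdef
  have hpq : r.HolderConjugate q := Real.HolderConjugate.conjExponent hr1
  have hq0 : 0 < q := hpq.symm.pos
  have hA' : (0 : H →L[ℂ] H) ≤ CFC.rpow A r := by
    rw [CFC.rpow_eq_pow]; exact CFC.rpow_nonneg
  set c := Complex.re (inner ℂ (CFC.rpow A r x) x : ℂ) with hcdef
  have hc0 : 0 ≤ c := re_inner_nonneg_of_nonneg hA' x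
  set a := Complex.re (inner ℂ (A x) x : ℂ) with hadef
  have ha0 : 0 ≤ a := re_inner_nonneg_of_nonneg hA x
  have hcont : ContinuousOn (fun t : ℝ => t ^ r) (spectrum ℝ A) := fun t _ =>
    (Real.continuousAt_rpow_const t r (Or.inr hr0.le)).continuousWithinAt
  have key : ∀ μ : ℝ, 0 < μ → a ≤ μ ^ r / r * c + μ ^ (-q) / q := by
    intro μ hμ
    have hop : A ≤ cfc (fun t : ℝ => μ ^ r / r * t ^ r + μ ^ (-q) / q) A := by
      conv_lhs => rw [← cfc_id ℝ A hsa]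
      refine cfc_mono (fun t ht => ?_) ?_ ?_
      · have ht0 : 0 ≤ t := spectrum_nonneg_of_nonneg hA ht
        have h := young_aux ht0 hμ hpq
        have e : μ ^ r * t ^ r / r = μ ^ r / r * t ^ r := by ring
        simpa only [id, e] using h
      · exact continuousOn_id
      · exact ((continuousOn_const.mul hcont).add continuousOn_const)
    have heq2 : cfc (fun t : ℝ => μ ^ r / r * t ^ r + μ ^ (-q) / q) A
        = (μ ^ r / r) • CFC.rpow A r + algebraMap ℝ (H →L[ℂ] H) (μ ^ (-q) / q) := by
      rw [cfc_add (a := A) (fun t : ℝ => μ ^ r / r * t ^ r) (fun _ => μ ^ (-q) / q) (continuousOn_const.mul hcont) continuousOn_const,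
        cfc_const_mul _ _ _ hcont, cfc_const _ _ hsa, rpow_eq_real_cfc hA]
    have hle := re_inner_le_of_le (heq2 ▸ hop) x
    rw [ContinuousLinearMap.add_apply] at hle
    rw [inner_add_left, Complex.add_re] at hle
    have e1 : Complex.re (inner ℂ (((μ ^ r / r) • CFC.rpow A r) x) x : ℂ)
        = μ ^ r / r * c := by
      rw [ContinuousLinearMap.smul_apply]
      rw [show (μ ^ r / r) • (CFC.rpow A r x) = ((μ ^ r / r : ℝ) : ℂ) • (CFC.rpow A r x) from
        (RCLike.real_smul_eq_coe_smul (K := ℂ) _ _)]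
      rw [inner_smul_left]
      simp [hcdef]
    have e2 : Complex.re (inner ℂ ((algebraMap ℝ (H →L[ℂ] H) (μ ^ (-q) / q)) x) x : ℂ)
        = μ ^ (-q) / q := by
      rw [Algebra.algebraMap_eq_smul_one, ContinuousLinearMap.smul_apply,
        ContinuousLinearMap.one_apply]
      rw [show (μ ^ (-q) / q) • x = ((μ ^ (-q) / q : ℝ) : ℂ) • x from
        (RCLike.real_smul_eq_coe_smul (K := ℂ) _ _)]
      rw [inner_smul_left]
      have : Complex.re (inner ℂ x x : ℂ) = 1 := by
        rw [show (inner ℂ x x : ℂ) = ((‖x‖:ℂ))^2 from inner_self_eq_norm_sq_to_K x, hx]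
        norm_num
      simp [this, hx]
    rw [e1, e2] at hle
    exact hle
  rcases eq_or_lt_of_le hc0 with hc | hc
  · -- c = 0 : show a = 0
    have haz : a ≤ 0 := by
      have h' : ∀ ε : ℝ, 0 < ε → a ≤ 0 + ε := by
        intro ε hε
        set μ := (q * ε) ^ (-(1/q)) with hμdef
        have hqε : 0 < q * ε := mul_pos hq0 hε
        have hμ : 0 < μ := Real.rpow_pos_of_pos hqε _
        have hμq : μ ^ (-q) = q * ε := by
          rw [hμdef, ← Real.rpow_mul hqε.le]
          have h5 : -(1/q) * -q = 1 := by field_simp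
          rw [h5, Real.rpow_one]
        have := key μ hμ
        rw [← hc, mul_zero, zero_add, hμq] at this
        rw [zero_add]
        calc a ≤ q * ε / q := this
          _ = ε := by field_simp
      linarith [le_of_forall_pos_le_add h']
    have : a = 0 := le_antisymm haz ha0
    rw [this, ← hc, Real.zero_rpow hr0.ne']
  · -- c > 0 : optimize μ
    have hrq : 0 < r + q := by linarith
    set μ := c ^ (-(1/(r+q))) with hμdef
    have hμ : 0 < μ := Real.rpow_pos_of_pos hc _
    have hconj : 1/r + 1/q = 1 := by
      have := hpq.inv_add_inv_eq_one
      simpa [one_div] using this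
    have hmul : r * q = r + q := hpq.mul_eq_add
    have h1 : μ ^ r * c = c ^ (1/r) := by
      rw [hμdef, ← Real.rpow_mul hc.le]
      nth_rewrite 2 [show c = c ^ (1:ℝ) from (Real.rpow_one c).symm]
      rw [← Real.rpow_add hc]
      congr 1
      rw [← hmul]
      have e : -(1 / (r * q)) * r = -(1/q) := by
        field_simp
      rw [e]
      linarith
    have h2 : μ ^ (-q) = c ^ (1/r) := by
      rw [hμdef, ← Real.rpow_mul hc.le]
      congr 1
      rw [← hmul]
      field_simp
    have hbound : a ≤ c ^ (1/r) := by
      have := key μ hμ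
      have e : μ ^ r / r * c + μ ^ (-q) / q = (μ ^ r * c) / r + μ ^ (-q) / q := by ring
      rw [e, h1, h2] at this
      have einv : c ^ (1/r) / r + c ^ (1/r) / q = c ^ (1/r) * (1/r + 1/q) := by ring
      have hconj : 1/r + 1/q = 1 := by
        have := hpq.inv_add_inv_eq_one
        simpa [one_div] using this
      rw [einv, hconj, mul_one] at this
      exact this
    calc a ^ r ≤ (c ^ (1/r)) ^ r := Real.rpow_le_rpow ha0 hbound hr0.le
      _ = c := by
        rw [← Real.rpow_mul hc.le, one_div, inv_mul_cancel₀ hr0.ne', Real.rpow_one]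

lemma numRadius_nonneg (M : H →L[ℂ] H) : 0 ≤ numRadius M :=
  Real.sSup_nonneg (by rintro s ⟨x, hx, rfl⟩; positivity)

lemma bddAbove_numRadiusSet (M : H →L[ℂ] H) :
    BddAbove {s : ℝ | ∃ x : H, ‖x‖ = 1 ∧ s = ‖(inner ℂ (M x) x : ℂ)‖} := by
  refine ⟨‖M‖, ?_⟩
  rintro s ⟨x, hx, rfl⟩
  calc ‖(inner ℂ (M x) x : ℂ)‖ ≤ ‖M x‖ * ‖x‖ := norm_inner_le_norm _ _
    _ ≤ (‖M‖ * ‖x‖) * ‖x‖ := by gcongr; exact M.le_opNorm x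
    _ = ‖M‖ := by rw [hx]; ring

lemma norm_inner_le_numRadius {M : H →L[ℂ] H} {x : H} (hx : ‖x‖ = 1) :
    ‖(inner ℂ (M x) x : ℂ)‖ ≤ numRadius M :=
  le_csSup (bddAbove_numRadiusSet M) ⟨x, hx, rfl⟩

set_option maxHeartbeats 1000000 in
lemma pointwise_core (T : H →L[ℂ] H) {r : ℝ} (hr : 1 ≤ r) {x : H} (hx : ‖x‖ = 1) :
    ‖(inner ℂ (T x) x : ℂ)‖ ^ (2*r) ≤
      (1/2) * numRadius (T ^ 2) ^ r
        + (1/4) * ‖CFC.rpow (star T * T) r + CFC.rpow (T * star T) r‖ := by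
  have hr0 : (0:ℝ) < r := lt_of_lt_of_le one_pos hr
  have hRHS0 : 0 ≤ (1/2) * numRadius (T ^ 2) ^ r
      + (1/4) * ‖CFC.rpow (star T * T) r + CFC.rpow (T * star T) r‖ := by
    have h1 := numRadius_nonneg (T ^ 2)
    have h2 : (0:ℝ) ≤ numRadius (T ^ 2) ^ r := Real.rpow_nonneg h1 r
    positivity
  set z : ℂ := inner ℂ (T x) x with hzdef
  by_cases hz0 : z = 0
  · rw [hz0, norm_zero, Real.zero_rpow (by positivity)]
    exact hRHS0
  -- the unimodular scalar
  have hnz : ‖z‖ ≠ 0 := norm_ne_zero_iff.mpr hz0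
  set c : ℂ := z / (‖z‖ : ℂ) with hcdef
  have hc1 : ‖c‖ = 1 := by
    rw [hcdef, norm_div, Complex.norm_real, norm_norm, div_self hnz]
  have hcz : (starRingEnd ℂ) c * z = (‖z‖ : ℂ) := by
    rw [hcdef, map_div₀, Complex.conj_ofReal, div_mul_eq_mul_div, mul_comm,
      Complex.mul_conj, Complex.normSq_eq_norm_sq]
    push_cast
    have hcast : (‖z‖ : ℂ) ≠ 0 := Complex.ofReal_ne_zero.mpr hnz
    rw [sq, mul_div_assoc, div_self hcast, mul_one]
  set S : H →L[ℂ] H := c • T with hSdef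
  set u := S x with hudef
  set v := (star S) x with hvdef
  have hstar : (star S : H →L[ℂ] H) = ContinuousLinearMap.adjoint S :=
    ContinuousLinearMap.star_eq_adjoint S
  -- s = re ⟪S x, x⟫
  have hSxin : (inner ℂ u x : ℂ) = (‖z‖ : ℂ) := by
    rw [hudef, hSdef, ContinuousLinearMap.smul_apply, inner_smul_left, ← hzdef, hcz]
  have hvin : (inner ℂ v x : ℂ) = (starRingEnd ℂ) (‖z‖ : ℂ) := by
    rw [hvdef, hstar, ContinuousLinearMap.adjoint_inner_left, ← inner_conj_symm, hSxin]
  -- 2‖z‖ ≤ ‖u + v‖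
  have h2s : 2 * ‖z‖ ≤ ‖u + v‖ := by
    have : (inner ℂ (u + v) x : ℂ) = 2 * (‖z‖:ℂ) := by
      rw [inner_add_left, hSxin, hvin, Complex.conj_ofReal]
      ring
    have hle : ‖(inner ℂ (u + v) x : ℂ)‖ ≤ ‖u + v‖ * ‖x‖ := norm_inner_le_norm _ _
    rw [this, hx, mul_one] at hle
    calc 2 * ‖z‖ = ‖(2 : ℂ) * (‖z‖:ℂ)‖ := by
          rw [norm_mul]
          simp
      _ ≤ ‖u + v‖ := hle
    -- done
  -- norms of u and v
  have hA : (0:H →L[ℂ] H) ≤ star T * T := star_mul_self_nonneg T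
  have hB : (0:H →L[ℂ] H) ≤ T * star T := mul_star_self_nonneg T
  set a1 := Complex.re (inner ℂ ((star T * T) x) x : ℂ) with ha1def
  set a2 := Complex.re (inner ℂ ((T * star T) x) x : ℂ) with ha2def
  have ha1 : 0 ≤ a1 := re_inner_nonneg_of_nonneg hA x
  have ha2 : 0 ≤ a2 := re_inner_nonneg_of_nonneg hB x
  have hu2 : ‖u‖ ^ 2 = a1 := by
    have h1 : ‖u‖ = ‖T x‖ := by
      rw [hudef, hSdef, ContinuousLinearMap.smul_apply, norm_smul, hc1, one_mul]
    have h2 : (inner ℂ ((star T * T) x) x : ℂ) = inner ℂ (T x) (T x) := by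
      rw [ContinuousLinearMap.mul_apply, ContinuousLinearMap.star_eq_adjoint,
        ContinuousLinearMap.adjoint_inner_left]
    rw [ha1def, h2, h1]
    rw [show (inner ℂ (T x) (T x) : ℂ) = ((‖T x‖:ℂ))^2 from inner_self_eq_norm_sq_to_K (T x)]
    simp [← Complex.ofReal_pow]
  have hv2 : ‖v‖ ^ 2 = a2 := by
    have h1 : ‖v‖ = ‖(star T) x‖ := by
      rw [hvdef, hSdef, star_smul, ContinuousLinearMap.smul_apply, norm_smul]
      simp [RCLike.norm_conj, hc1]
    have h2 : (inner ℂ ((T * star T) x) x : ℂ) = inner ℂ ((star T) x) ((star T) x) := by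
      rw [ContinuousLinearMap.mul_apply]
      rw [show T ((star T) x) = (ContinuousLinearMap.adjoint (star T)) ((star T) x) by
        rw [← ContinuousLinearMap.star_eq_adjoint, star_star]]
      rw [ContinuousLinearMap.adjoint_inner_left]
    rw [ha2def, h2, h1]
    rw [show (inner ℂ ((star T) x) ((star T) x) : ℂ) = ((‖(star T) x‖:ℂ))^2 from
      inner_self_eq_norm_sq_to_K ((star T) x)]
    simp [← Complex.ofReal_pow]
  -- cross term
  set w2 := ‖(inner ℂ ((T ^ 2) x) x : ℂ)‖ with hw2def
  have hw20 : 0 ≤ w2 := norm_nonneg _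
  have hcross : Complex.re (inner ℂ u v : ℂ) ≤ w2 := by
    have h1 : (inner ℂ u v : ℂ) = inner ℂ ((S * S) x) x := by
      rw [hudef, hvdef, hstar, ContinuousLinearMap.adjoint_inner_right,
        ContinuousLinearMap.mul_apply]
    have h2 : (S * S : H →L[ℂ] H) = (c * c) • (T ^ 2) := by
      rw [hSdef, smul_mul_smul_comm, sq]
    have h3 : (inner ℂ ((S * S) x) x : ℂ)
        = (starRingEnd ℂ) (c * c) * inner ℂ ((T ^ 2) x) x := by
      rw [h2, ContinuousLinearMap.smul_apply, inner_smul_left]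
    calc Complex.re (inner ℂ u v : ℂ) ≤ ‖(inner ℂ u v : ℂ)‖ := Complex.re_le_norm _
      _ = ‖(starRingEnd ℂ) (c * c)‖ * ‖(inner ℂ ((T ^ 2) x) x : ℂ)‖ := by
          rw [h1, h3, norm_mul]
      _ = w2 := by rw [RCLike.norm_conj, norm_mul, hc1, one_mul, one_mul, hw2def]
  -- quadratic bound : 4 ‖z‖^2 ≤ a1 + a2 + 2 * w2
  have hquad : ‖z‖ ^ 2 ≤ (1/2) * w2 + (1/2) * ((1/2) * a1 + (1/2) * a2) := by
    have hsq : (2 * ‖z‖) ^ 2 ≤ ‖u + v‖ ^ 2 := by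
      have h0 : 0 ≤ 2 * ‖z‖ := by positivity
      exact pow_le_pow_left₀ h0 h2s 2
    have hexp : ‖u + v‖ ^ 2 = ‖u‖ ^ 2 + 2 * Complex.re (inner ℂ u v : ℂ) + ‖v‖ ^ 2 := by
      have := norm_add_sq (𝕜 := ℂ) (E := H) u v
      simpa using this
    rw [hexp, hu2, hv2] at hsq
    nlinarith [hcross]
  -- now assemble with rpow convexity and McCarthy
  have hb : 0 ≤ (1/2) * a1 + (1/2) * a2 := by positivity
  have hmid : ‖z‖ ^ (2*r) ≤ ((1/2) * w2 + (1/2) * ((1/2) * a1 + (1/2) * a2)) ^ r := by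
    have e1 : ‖z‖ ^ (2*r) = (‖z‖ ^ 2) ^ r := by
      rw [← Real.rpow_natCast ‖z‖ 2, ← Real.rpow_mul (norm_nonneg z)]
      norm_num
    rw [e1]
    exact Real.rpow_le_rpow (by positivity) hquad hr0.le
  have hconv1 : ((1/2) * w2 + (1/2) * ((1/2) * a1 + (1/2) * a2)) ^ r
      ≤ (1/2) * w2 ^ r + (1/2) * ((1/2) * a1 + (1/2) * a2) ^ r :=
    half_half_rpow_le hw20 hb hr
  have hconv2 : ((1/2) * a1 + (1/2) * a2) ^ r ≤ (1/2) * a1 ^ r + (1/2) * a2 ^ r :=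
    half_half_rpow_le ha1 ha2 hr
  -- w2 ≤ numRadius (T^2)
  have hw2rad : w2 ^ r ≤ numRadius (T ^ 2) ^ r :=
    Real.rpow_le_rpow hw20 (norm_inner_le_numRadius hx) hr0.le
  -- a1^r, a2^r via McCarthy
  have hm1 : a1 ^ r ≤ Complex.re (inner ℂ (CFC.rpow (star T * T) r x) x : ℂ) :=
    mccarthy hA hr hx
  have hm2 : a2 ^ r ≤ Complex.re (inner ℂ (CFC.rpow (T * star T) r x) x : ℂ) :=
    mccarthy hB hr hx
  have hsum : Complex.re (inner ℂ (CFC.rpow (star T * T) r x) x : ℂ)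
      + Complex.re (inner ℂ (CFC.rpow (T * star T) r x) x : ℂ)
      ≤ ‖CFC.rpow (star T * T) r + CFC.rpow (T * star T) r‖ := by
    set M := CFC.rpow (star T * T) r + CFC.rpow (T * star T) r with hM
    have e : Complex.re (inner ℂ (CFC.rpow (star T * T) r x) x : ℂ)
        + Complex.re (inner ℂ (CFC.rpow (T * star T) r x) x : ℂ)
        = Complex.re (inner ℂ (M x) x : ℂ) := by
      rw [hM, ContinuousLinearMap.add_apply, inner_add_left, Complex.add_re]
    rw [e]
    calc Complex.re (inner ℂ (M x) x : ℂ) ≤ ‖(inner ℂ (M x) x : ℂ)‖ := Complex.re_le_norm _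
      _ ≤ ‖M x‖ * ‖x‖ := norm_inner_le_norm _ _
      _ ≤ (‖M‖ * ‖x‖) * ‖x‖ := by gcongr; exact M.le_opNorm x
      _ = ‖M‖ := by rw [hx]; ring
  calc ‖z‖ ^ (2*r) ≤ (1/2) * w2 ^ r + (1/2) * ((1/2) * a1 + (1/2) * a2) ^ r :=
        le_trans hmid hconv1
    _ ≤ (1/2) * numRadius (T ^ 2) ^ r
        + (1/2) * ((1/2) * a1 ^ r + (1/2) * a2 ^ r) := by
        have := hconv2
        nlinarith
    _ ≤ (1/2) * numRadius (T ^ 2) ^ r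
        + (1/4) * ‖CFC.rpow (star T * T) r + CFC.rpow (T * star T) r‖ := by
        nlinarith [hm1, hm2, hsum]

theorem stmt4 (T : H →L[ℂ] H) (r : ℝ) (hr : 1 ≤ r) :
    numRadius T ^ (2 * r) ≤
      (1/2) * numRadius (T ^ 2) ^ r
        + (1/4) * ‖CFC.rpow (star T * T) r + CFC.rpow (T * star T) r‖ := by
  have hr0 : (0:ℝ) < r := lt_of_lt_of_le one_pos hr
  have h2r : (0:ℝ) < 2 * r := by linarith
  set K := (1/2) * numRadius (T ^ 2) ^ r
      + (1/4) * ‖CFC.rpow (star T * T) r + CFC.rpow (T * star T) r‖ with hKdef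
  have hK0 : 0 ≤ K := by
    have h1 := numRadius_nonneg (T ^ 2)
    have h2 : (0:ℝ) ≤ numRadius (T ^ 2) ^ r := Real.rpow_nonneg h1 r
    rw [hKdef]; positivity
  have hsup : numRadius T ≤ K ^ (1/(2*r)) := by
    refine Real.sSup_le ?_ (Real.rpow_nonneg hK0 _)
    rintro s ⟨x, hx, rfl⟩
    have hp : ‖(inner ℂ (T x) x : ℂ)‖ ^ (2*r) ≤ K := pointwise_core T hr hx
    have hs0 : (0:ℝ) ≤ ‖(inner ℂ (T x) x : ℂ)‖ := norm_nonneg _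
    calc ‖(inner ℂ (T x) x : ℂ)‖
        = (‖(inner ℂ (T x) x : ℂ)‖ ^ (2*r)) ^ (1/(2*r)) := by
          rw [← Real.rpow_mul hs0]
          rw [show (2*r) * (1/(2*r)) = 1 by field_simp]
          rw [Real.rpow_one]
      _ ≤ K ^ (1/(2*r)) :=
          Real.rpow_le_rpow (Real.rpow_nonneg hs0 _) hp (by positivity)
  calc numRadius T ^ (2*r) ≤ (K ^ (1/(2*r))) ^ (2*r) :=
        Real.rpow_le_rpow (numRadius_nonneg T) hsup h2r.le
    _ = K := by
        rw [← Real.rpow_mul hK0]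
        rw [show (1/(2*r)) * (2*r) = 1 by field_simp]
        rw [Real.rpow_one]
end

section
/- For a bounded linear operator T on a complex Hilbert space, w(T) ≤ inf over real φ of √(‖Re(e^{iφ}T)‖² + ‖Re(e^{i(φ+π/2)}T)‖²). -/
open Complex

variable {H : Type*} [NormedAddCommGroup H] [InnerProductSpace ℂ H] [CompleteSpace H]

lemma reOp_inner (S : H →L[ℂ] H) (x : H) :
    (inner ℂ ((reOp S) x) x : ℂ) = (((inner ℂ (S x) x : ℂ).re : ℝ) : ℂ) := by
  simp only [reOp, ContinuousLinearMap.smul_apply, ContinuousLinearMap.add_apply,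
    inner_smul_left, inner_add_left, ContinuousLinearMap.star_eq_adjoint,
    ContinuousLinearMap.adjoint_inner_left]
  rw [← inner_conj_symm x (S x)]
  rw [Complex.add_conj]
  push_cast
  rw [show ((starRingEnd ℂ) 2⁻¹ : ℂ) = 2⁻¹ by rw [map_inv₀, map_ofNat]]
  ring

lemma key_bound (S : H →L[ℂ] H) (x : H) (hx : ‖x‖ = 1) :
    |(inner ℂ (S x) x : ℂ).re| ≤ ‖reOp S‖ := by
  have h2 : ‖(inner ℂ ((reOp S) x) x : ℂ)‖ ≤ ‖(reOp S) x‖ * ‖x‖ := norm_inner_le_norm _ _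
  rw [reOp_inner, hx, mul_one, Complex.norm_real, Real.norm_eq_abs] at h2
  refine h2.trans ?_
  have := (reOp S).le_opNorm x
  rwa [hx, mul_one] at this

theorem stmt5 (T : H →L[ℂ] H) :
    numRadius T ≤
      ⨅ φ : ℝ, Real.sqrt (‖reOp (Complex.exp (φ * Complex.I) • T)‖ ^ 2
        + ‖reOp (Complex.exp (((φ + Real.pi / 2 : ℝ) : ℂ) * Complex.I) • T)‖ ^ 2) := by
  apply le_ciInf
  intro φ
  apply Real.sSup_le
  · rintro r ⟨x, hx, rfl⟩
    set e : ℂ := Complex.exp (φ * Complex.I) with he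
    set e' : ℂ := Complex.exp (((φ + Real.pi / 2 : ℝ) : ℂ) * Complex.I) with he'def
    set A : ℝ := ‖reOp (e • T)‖
    set B : ℝ := ‖reOp (e' • T)‖
    have hA := key_bound (e • T) x hx
    have hB := key_bound (e' • T) x hx
    set w : ℂ := inner ℂ (T x) x with hw
    have h1 : (inner ℂ ((e • T) x) x : ℂ) = (starRingEnd ℂ e) * w := by
      simp [inner_smul_left, hw, mul_comm]
    have h2 : (inner ℂ ((e' • T) x) x : ℂ) = (starRingEnd ℂ e') * w := by
      simp [inner_smul_left, hw, mul_comm]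
    have he' : e' = e * Complex.I := by
      rw [he'def, he, show (((φ + Real.pi / 2 : ℝ) : ℂ) * Complex.I)
          = (φ : ℂ) * Complex.I + ((Real.pi / 2 : ℝ) : ℂ) * Complex.I by push_cast; ring,
        Complex.exp_add]
      congr 1
      rw [Complex.exp_mul_I, ← Complex.ofReal_cos, ← Complex.ofReal_sin,
        Real.cos_pi_div_two, Real.sin_pi_div_two]
      simp
    set z : ℂ := (starRingEnd ℂ e) * w with hz
    have hzre : |z.re| ≤ A := by rw [h1] at hA; exact hA
    have hzim : |z.im| ≤ B := by
      have : (inner ℂ ((e' • T) x) x : ℂ).re = z.im := by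
        rw [h2, he']
        simp [hz, Complex.mul_re, Complex.mul_im]
        ring
      rw [this] at hB
      exact hB
    have hne : ‖e‖ = 1 := by
      rw [he]; exact Complex.norm_exp_ofReal_mul_I φ
    have hnw : ‖w‖ = ‖z‖ := by rw [hz, norm_mul, RCLike.norm_conj, hne, one_mul]
    rw [hnw, Complex.norm_def, Complex.normSq_apply]
    apply Real.sqrt_le_sqrt
    nlinarith [abs_nonneg z.re, abs_nonneg z.im, _root_.sq_abs z.re, _root_.sq_abs z.im,
      abs_mul_abs_self z.re, abs_mul_abs_self z.im]
  · exact Real.sqrt_nonneg _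
end

section
/- For a bounded linear operator T on a complex Hilbert space with P = T*T + TT*, w(T)⁴ ≥ (1/4)C(T²)² + (1/8)m(T²P + PT²) + (1/16)‖P‖², where C(S) = inf over unit vectors x and real φ of ‖Re(e^{iφ}S)x‖ and m(S) = inf{|⟨Sx,x⟩| : ‖x‖ = 1} is the Crawford number. -/
open Complex

variable {H : Type*} [NormedAddCommGroup H] [InnerProductSpace ℂ H] [CompleteSpace H]

/-- `C(S) = inf over unit vectors x and φ ∈ ℝ of ‖Re(e^{iφ}S)x‖`. -/
noncomputable def lowerC (S : H →L[ℂ] H) : ℝ :=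
  sInf {r : ℝ | ∃ (x : H) (φ : ℝ), ‖x‖ = 1 ∧
    r = ‖reOp (Complex.exp (φ * Complex.I) • S) x‖}

local notation "⟪" x ", " y "⟫" => @inner ℂ _ _ x y

lemma opNorm_le_unit {A : H →L[ℂ] H} {M : ℝ} (hM : 0 ≤ M)
    (h : ∀ x : H, ‖x‖ = 1 → ‖A x‖ ≤ M) : ‖A‖ ≤ M := by
  refine A.opNorm_le_bound hM fun x => ?_
  rcases eq_or_ne x 0 with rfl | hx
  · simp
  · have hn : ‖x‖ ≠ 0 := norm_ne_zero_iff.mpr hx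
    have hu : ‖((‖x‖⁻¹ : ℝ) : ℂ) • x‖ = 1 := by
      simp [norm_smul, _root_.abs_of_nonneg (inv_nonneg.2 (norm_nonneg x)), inv_mul_cancel₀ hn]
    have := h _ hu
    rw [map_smul, norm_smul] at this
    simp only [Complex.norm_real, Real.norm_eq_abs,
      _root_.abs_of_nonneg (inv_nonneg.2 (norm_nonneg x))] at this
    calc ‖A x‖ = ‖x‖ * (‖x‖⁻¹ * ‖A x‖) := by field_simp
    _ ≤ ‖x‖ * M := mul_le_mul_of_nonneg_left this (norm_nonneg x)
    _ = M * ‖x‖ := mul_comm _ _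

lemma reOp_selfAdjoint (S : H →L[ℂ] H) : IsSelfAdjoint (reOp S) := by
  rw [IsSelfAdjoint, reOp, star_smul, star_add, star_star]
  simp [add_comm]

lemma selfAdjoint_norm_le {A : H →L[ℂ] H} {M : ℝ} (hA : IsSelfAdjoint A) (hM : 0 ≤ M)
    (h : ∀ x : H, ‖x‖ = 1 → ‖⟪A x, x⟫‖ ≤ M) : ‖A‖ ≤ M := by
  have h' : ∀ z : H, ‖⟪A z, z⟫‖ ≤ M * ‖z‖ ^ 2 := by
    intro z
    rcases eq_or_ne z 0 with rfl | hz
    · simp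
    · have hn : ‖z‖ ≠ 0 := norm_ne_zero_iff.mpr hz
      have hu : ‖((‖z‖⁻¹ : ℝ) : ℂ) • z‖ = 1 := by
        simp [norm_smul, _root_.abs_of_nonneg (inv_nonneg.2 (norm_nonneg z)), inv_mul_cancel₀ hn]
      have := h _ hu
      rw [map_smul, inner_smul_left, inner_smul_right] at this
      simp only [Complex.conj_ofReal, norm_mul, Complex.norm_real, Real.norm_eq_abs,
        _root_.abs_of_nonneg (inv_nonneg.2 (norm_nonneg z)), ← mul_assoc] at this
      calc ‖⟪A z, z⟫‖ = ‖z‖^2 * (‖z‖⁻¹ * ‖z‖⁻¹ * ‖⟪A z, z⟫‖) := by field_simp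
      _ ≤ ‖z‖^2 * M := mul_le_mul_of_nonneg_left this (by positivity)
      _ = M * ‖z‖^2 := mul_comm _ _
  have key : ∀ x y : H, ‖x‖ = 1 → ‖y‖ = 1 → re ⟪A x, y⟫ ≤ M := by
    intro x y hx hy
    have hpol : ⟪A (x+y), x+y⟫ - ⟪A (x-y), x-y⟫ = 2 * ⟪A x, y⟫ + 2 * ⟪A y, x⟫ := by
      simp only [map_add, map_sub, inner_add_left, inner_add_right, inner_sub_left,
        inner_sub_right]
      ring
    have hsym : ⟪A y, x⟫ = starRingEnd ℂ ⟪A x, y⟫ := by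
      have h1 : ⟪A y, x⟫ = ⟪y, A x⟫ := hA.isSymmetric y x
      rw [h1, ← inner_conj_symm]
    have hre : re (⟪A (x+y), x+y⟫ - ⟪A (x-y), x-y⟫) = 4 * re ⟪A x, y⟫ := by
      rw [hpol, hsym]
      have hz : ∀ z : ℂ, re (2*z + 2*(starRingEnd ℂ) z) = 4 * re z := by
        intro z; simp [Complex.add_re, Complex.mul_re]; ring
      exact hz _
    have h1 : re ⟪A (x+y), x+y⟫ ≤ M * ‖x+y‖^2 :=
      (Complex.re_le_norm _).trans (h' (x+y))
    have h2 : -re ⟪A (x-y), x-y⟫ ≤ M * ‖x-y‖^2 := by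
      have := (Complex.abs_re_le_norm ⟪A (x-y), x-y⟫).trans (h' (x-y))
      linarith [neg_abs_le (re ⟪A (x-y), x-y⟫)]
    have hpar : ‖x+y‖^2 + ‖x-y‖^2 = 4 := by
      have := parallelogram_law_with_norm ℂ x y
      rw [hx, hy] at this
      nlinarith [this]
    have := Complex.sub_re ⟪A (x+y), x+y⟫ ⟪A (x-y), x-y⟫
    nlinarith [h1, h2, hre, hpar]
  refine opNorm_le_unit hM fun x hx => ?_
  rcases eq_or_ne (A x) 0 with h0 | h0
  · simp [h0, hM]
  · have hn : ‖A x‖ ≠ 0 := norm_ne_zero_iff.mpr h0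
    have hy : ‖((‖A x‖⁻¹ : ℝ) : ℂ) • A x‖ = 1 := by
      simp [norm_smul, _root_.abs_of_nonneg (inv_nonneg.2 (norm_nonneg (A x))), inv_mul_cancel₀ hn]
    have hk := key x _ hx hy
    have hself : ⟪A x, A x⟫ = (‖A x‖ : ℂ)^2 := inner_self_eq_norm_sq_to_K (A x)
    rw [inner_smul_right, hself] at hk
    have hre2 : re (((‖A x‖⁻¹ : ℝ) : ℂ) * (‖A x‖ : ℂ)^2) = ‖A x‖ := by
      have : (((‖A x‖⁻¹ : ℝ) : ℂ) * (‖A x‖:ℂ)^2) = ((‖A x‖⁻¹ * ‖A x‖^2 : ℝ) : ℂ) := by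
        push_cast; ring
      rw [this, Complex.ofReal_re, sq]
      field_simp
    linarith [hk, hre2.symm.le]

lemma reOp_sq (T : H →L[ℂ] H) (θ : ℝ) :
    reOp (Complex.exp (θ * I) • T) * reOp (Complex.exp (θ * I) • T) =
      (2:ℂ)⁻¹ • reOp (Complex.exp ((2*θ : ℝ) * I) • (T * T))
        + (4:ℂ)⁻¹ • (star T * T + T * star T) := by
  set a := Complex.exp (θ * I) with ha
  have hconj : (starRingEnd ℂ) a = Complex.exp (-(θ * I)) := by
    rw [ha, ← Complex.exp_conj]
    congr 1
    simp
  have h1 : a * (starRingEnd ℂ) a = 1 := by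
    rw [hconj, ← Complex.exp_add]
    simp
  have hb : Complex.exp (((2*θ : ℝ) : ℂ) * I) = a * a := by
    rw [ha, ← Complex.exp_add]
    push_cast
    ring_nf
  have hbc : (starRingEnd ℂ) (a * a) = (starRingEnd ℂ) a * (starRingEnd ℂ) a := by
    rw [map_mul]
  rw [reOp, reOp, star_smul, star_smul, hb]
  simp only [Complex.star_def, hbc]
  rw [star_mul]
  simp only [smul_mul_smul_comm, mul_add, add_mul, smul_add, smul_smul]
  match_scalars <;> first | ring1 | linear_combination ((1:ℂ)/4) * h1

lemma conj_exp_mul_I (t : ℝ) :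
    (starRingEnd ℂ) (Complex.exp ((t:ℂ) * I)) = Complex.exp (-((t:ℂ) * I)) := by
  rw [← Complex.exp_conj]
  congr 1
  simp

lemma reOp_inner_s8 (S : H →L[ℂ] H) (c : ℂ) (x : H) :
    ⟪(reOp (c • S)) x, x⟫
      = (2:ℂ)⁻¹ * ((starRingEnd ℂ) c * ⟪S x, x⟫ + c * (starRingEnd ℂ) ⟪S x, x⟫) := by
  have h1 : (reOp (c • S)) x = (2:ℂ)⁻¹ • (c • S x + (starRingEnd ℂ) c • (star S) x) := by
    simp [reOp, star_smul, smul_add]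
  rw [h1, inner_smul_left, inner_add_left, inner_smul_left, inner_smul_left]
  have h2 : ⟪(star S) x, x⟫ = (starRingEnd ℂ) ⟪S x, x⟫ := by
    rw [ContinuousLinearMap.star_eq_adjoint, ContinuousLinearMap.adjoint_inner_left,
      ← inner_conj_symm]
  rw [h2]
  simp only [map_inv₀, Complex.conj_conj, map_ofNat, ← inner_conj_symm x (S x)]

theorem stmt8 (T : H →L[ℂ] H) :
    numRadius T ^ 4 ≥
      (1/4) * lowerC (T ^ 2) ^ 2
        + (1/8) * crawford (T ^ 2 * (star T * T + T * star T)
            + (star T * T + T * star T) * T ^ 2)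
        + (1/16) * ‖star T * T + T * star T‖ ^ 2 := by
  set P : H →L[ℂ] H := star T * T + T * star T with hPdef
  set S : H →L[ℂ] H := T ^ 2 * P + P * T ^ 2 with hSdef
  by_cases htriv : ∀ x : H, x = 0
  · have hset : ∀ (A : H →L[ℂ] H),
        {r : ℝ | ∃ x : H, ‖x‖ = 1 ∧ r = ‖(⟪A x, x⟫)‖} = (∅ : Set ℝ) := by
      intro A
      ext r
      simp only [Set.mem_setOf_eq, Set.mem_empty_iff_false, iff_false, not_exists]
      rintro x ⟨hx, -⟩
      rw [htriv x, norm_zero] at hx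
      norm_num at hx
    have hset2 : {r : ℝ | ∃ (x : H) (φ : ℝ), ‖x‖ = 1 ∧
        r = ‖reOp (Complex.exp (φ * Complex.I) • (T^2)) x‖} = (∅ : Set ℝ) := by
      ext r
      simp only [Set.mem_setOf_eq, Set.mem_empty_iff_false, iff_false, not_exists]
      rintro x φ ⟨hx, -⟩
      rw [htriv x, norm_zero] at hx
      norm_num at hx
    have hP0 : P = 0 := by
      ext x
      rw [htriv x]
      simp
    rw [numRadius, crawford, lowerC, hset, hset, hset2, hP0, Real.sSup_empty, Real.sInf_empty,
      norm_zero]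
    norm_num
  · push_neg at htriv
    obtain ⟨v, hv⟩ := htriv
    have hvn : ‖v‖ ≠ 0 := norm_ne_zero_iff.mpr hv
    obtain ⟨u, hu⟩ : ∃ x : H, ‖x‖ = 1 :=
      ⟨((‖v‖⁻¹ : ℝ) : ℂ) • v, by
        simp [norm_smul, _root_.abs_of_nonneg (inv_nonneg.2 (norm_nonneg v)),
          inv_mul_cancel₀ hvn]⟩
    set w := numRadius T with hw
    have hbdd : BddAbove {r : ℝ | ∃ x : H, ‖x‖ = 1 ∧ r = ‖(⟪T x, x⟫)‖} := by
      refine ⟨‖T‖, ?_⟩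
      rintro r ⟨x, hx, rfl⟩
      calc ‖⟪T x, x⟫‖ ≤ ‖T x‖ * ‖x‖ := norm_inner_le_norm _ _
      _ ≤ ‖T‖ * ‖x‖ * ‖x‖ := mul_le_mul_of_nonneg_right (T.le_opNorm x) (norm_nonneg x)
      _ = ‖T‖ := by rw [hx]; ring
    have hwb : ∀ x : H, ‖x‖ = 1 → ‖⟪T x, x⟫‖ ≤ w := fun x hx => le_csSup hbdd ⟨x, hx, rfl⟩
    have hw0 : 0 ≤ w := le_trans (norm_nonneg _) (hwb u hu)
    -- step C : ‖reOp (e^{iθ} T)‖ ≤ w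
    have hC : ∀ θ : ℝ, ‖reOp (Complex.exp ((θ:ℂ) * I) • T)‖ ≤ w := by
      intro θ
      refine selfAdjoint_norm_le (reOp_selfAdjoint _) hw0 fun x hx => ?_
      rw [reOp_inner_s8]
      have habs : ‖(Complex.exp ((θ:ℂ) * I))‖ = 1 := Complex.norm_exp_ofReal_mul_I θ
      calc ‖(2:ℂ)⁻¹ * ((starRingEnd ℂ) (Complex.exp ((θ:ℂ) * I)) * ⟪T x, x⟫
              + Complex.exp ((θ:ℂ) * I) * (starRingEnd ℂ) ⟪T x, x⟫)‖
          ≤ ‖(2:ℂ)⁻¹‖ * (‖(starRingEnd ℂ) (Complex.exp ((θ:ℂ) * I)) * ⟪T x, x⟫‖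
              + ‖Complex.exp ((θ:ℂ) * I) * (starRingEnd ℂ) ⟪T x, x⟫‖) := by
            rw [norm_mul]
            exact mul_le_mul_of_nonneg_left (norm_add_le _ _) (norm_nonneg _)
      _ = ‖⟪T x, x⟫‖ := by
            have hcn : ‖(starRingEnd ℂ) (Complex.exp ((θ:ℂ) * I))‖ = 1 := by
              rw [RingHomIsometric.norm_map, habs]
            have hen : ‖Complex.exp ((θ:ℂ) * I)‖ = 1 := by
              rw [habs]
            have hzn : ‖(starRingEnd ℂ) ⟪T x, x⟫‖ = ‖⟪T x, x⟫‖ := RingHomIsometric.norm_map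
            have h2 : ‖(2:ℂ)⁻¹‖ = 1/2 := by norm_num
            simp only [norm_mul, hcn, hen, hzn, h2]
            ring
      _ ≤ w := hwb x hx
    -- step D : pointwise inequality
    have hD : ∀ x : H, ‖x‖ = 1 →
        (1/4) * lowerC (T ^ 2) ^ 2 + (1/8) * crawford S + (1/16) * ‖P x‖ ^ 2 ≤ w ^ 4 := by
      intro x hx
      set z : ℂ := ⟪S x, x⟫ with hz
      set θ : ℝ := Complex.arg z / 2 with hθ
      have h2θ : (2 * θ : ℝ) = Complex.arg z := by
        rw [hθ]; ring
      set c : ℂ := Complex.exp ((θ:ℂ) * I) with hc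
      set Hop : H →L[ℂ] H := reOp (c • T) with hHop
      set R : H →L[ℂ] H := reOp (Complex.exp (((2*θ : ℝ) : ℂ) * I) • (T * T)) with hR
      -- operator identity
      have hsq : Hop * Hop = (2:ℂ)⁻¹ • R + (4:ℂ)⁻¹ • P := reOp_sq T θ
      -- apply to x
      have happ : Hop (Hop x) = (2:ℂ)⁻¹ • R x + (4:ℂ)⁻¹ • P x := by
        have := congrArg (fun (A : H →L[ℂ] H) => A x) hsq
        simpa [ContinuousLinearMap.mul_apply] using this
      -- norm expansion
      have hcross : ⟪(2:ℂ)⁻¹ • R x, (4:ℂ)⁻¹ • P x⟫ = (8:ℂ)⁻¹ * ⟪R x, P x⟫ := by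
        rw [inner_smul_left, inner_smul_right, ← mul_assoc, map_inv₀, map_ofNat]
        norm_num
      have hPsa : IsSelfAdjoint P := by
        rw [hPdef, IsSelfAdjoint, star_add, star_mul, star_mul, star_star]
      set β : ℂ := Complex.exp (((2*θ : ℝ) : ℂ) * I) with hβ
      set γ : ℂ := Complex.exp (-(((2*θ : ℝ) : ℂ) * I)) with hγ
      have hcβ : (starRingEnd ℂ) β = γ := conj_exp_mul_I (2*θ)
      have hcγ : (starRingEnd ℂ) γ = β := by
        rw [← hcβ, Complex.conj_conj]
      have hRx : R x = (2:ℂ)⁻¹ • (β • (T*T) x + γ • (star (T*T)) x) := by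
        rw [hR, reOp]
        simp only [ContinuousLinearMap.smul_apply, ContinuousLinearMap.add_apply,
          star_smul, Complex.star_def, hcβ]
      set a₁ : ℂ := ⟪(P * (T*T)) x, x⟫ with ha₁
      set a₂ : ℂ := ⟪((T*T) * P) x, x⟫ with ha₂
      have e1 : ⟪(T*T) x, P x⟫ = a₁ := by
        rw [ha₁, ContinuousLinearMap.mul_apply]
        exact (hPsa.isSymmetric ((T*T) x) x).symm
      have e2 : ⟪(star (T*T)) x, P x⟫ = (starRingEnd ℂ) a₂ := by
        rw [ContinuousLinearMap.star_eq_adjoint, ContinuousLinearMap.adjoint_inner_left,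
          ha₂, ContinuousLinearMap.mul_apply, ← inner_conj_symm]
        simp [ContinuousLinearMap.mul_apply]
      have hsum : a₁ + a₂ = z := by
        rw [hz, ha₁, ha₂, hSdef]
        rw [ContinuousLinearMap.add_apply, inner_add_left, pow_two]
        ring
      have hinner : ⟪R x, P x⟫ = (2:ℂ)⁻¹ * (γ * a₁ + β * (starRingEnd ℂ) a₂) := by
        rw [hRx, inner_smul_left, inner_add_left, inner_smul_left, inner_smul_left,
          hcβ, hcγ, e1, e2]
        simp only [map_inv₀, map_ofNat]
      have hγz : γ * z = (‖z‖ : ℂ) := by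
        have harg := Complex.norm_mul_exp_arg_mul_I z
        calc γ * z = γ * ((‖z‖ : ℂ) * Complex.exp ((z.arg : ℂ) * I)) := by rw [harg]
        _ = (‖z‖ : ℂ) * (γ * Complex.exp ((z.arg : ℂ) * I)) := by ring
        _ = (‖z‖ : ℂ) := by
            have harg2 : ((2*θ : ℝ) : ℂ) = (z.arg : ℂ) := by rw [← h2θ]
            rw [hγ, harg2, ← Complex.exp_add]
            simp
      have hRP : re ⟪R x, P x⟫ = (1/2) * ‖z‖ := by
        rw [hinner]
        have hre1 : re (β * (starRingEnd ℂ) a₂) = re (γ * a₂) := by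
          rw [← hcγ, ← map_mul, Complex.conj_re]
        have hre2 : re (γ * a₁ + β * (starRingEnd ℂ) a₂) = re (γ * (a₁ + a₂)) := by
          rw [Complex.add_re, hre1, mul_add, Complex.add_re]
        have : re ((2:ℂ)⁻¹ * (γ * a₁ + β * (starRingEnd ℂ) a₂))
            = (1/2) * re (γ * a₁ + β * (starRingEnd ℂ) a₂) := by
          have h8 : ((2:ℂ)⁻¹) = ((1/2 : ℝ) : ℂ) := by norm_num
          rw [h8]
          simp [Complex.mul_re]
        rw [this, hre2, hsum, hγz, Complex.ofReal_re]
      -- norm of H² x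
      have hns : ‖Hop (Hop x)‖^2
          = (1/4) * ‖R x‖^2 + (1/8) * ‖z‖ + (1/16) * ‖P x‖^2 := by
        rw [happ, @norm_add_sq ℂ]
        have hn1 : ‖(2:ℂ)⁻¹ • R x‖ = (1/2) * ‖R x‖ := by
          rw [norm_smul]; norm_num
        have hn2 : ‖(4:ℂ)⁻¹ • P x‖ = (1/4) * ‖P x‖ := by
          rw [norm_smul]; norm_num
        have hn3 : RCLike.re ⟪(2:ℂ)⁻¹ • R x, (4:ℂ)⁻¹ • P x⟫ = (1/8) * ((1/2) * ‖z‖) := by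
          have : RCLike.re ⟪(2:ℂ)⁻¹ • R x, (4:ℂ)⁻¹ • P x⟫ = re ((8:ℂ)⁻¹ * ⟪R x, P x⟫) := by
            rw [hcross]; rfl
          rw [this]
          have h8 : ((8:ℂ)⁻¹) = ((1/8 : ℝ) : ℂ) := by norm_num
          rw [h8]
          simp only [Complex.mul_re, Complex.ofReal_re, Complex.ofReal_im, zero_mul, sub_zero]
          rw [hRP]
        rw [hn1, hn2, hn3]
        ring
      -- norm bound
      have hHn : ‖Hop (Hop x)‖ ≤ w^2 := by
        calc ‖Hop (Hop x)‖ ≤ ‖Hop‖ * ‖Hop x‖ := Hop.le_opNorm _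
        _ ≤ ‖Hop‖ * (‖Hop‖ * ‖x‖) :=
            mul_le_mul_of_nonneg_left (Hop.le_opNorm x) (norm_nonneg _)
        _ = ‖Hop‖^2 := by rw [hx]; ring
        _ ≤ w^2 := pow_le_pow_left₀ (norm_nonneg _) (hC θ) 2
      have hfour : ‖Hop (Hop x)‖^2 ≤ w^4 := by
        calc ‖Hop (Hop x)‖^2 ≤ (w^2)^2 := pow_le_pow_left₀ (norm_nonneg _) hHn 2
        _ = w^4 := by ring
      -- bounds by inf
      have hCle : lowerC (T^2) ≤ ‖R x‖ := by
        apply csInf_le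
        · exact ⟨0, by rintro r ⟨y, φ, hy, rfl⟩; exact norm_nonneg _⟩
        · exact ⟨x, 2*θ, hx, by rw [hR, pow_two]⟩
      have hC0 : 0 ≤ lowerC (T^2) := by
        apply Real.sInf_nonneg
        rintro r ⟨y, φ, hy, rfl⟩
        exact norm_nonneg _
      have hCsq : lowerC (T^2)^2 ≤ ‖R x‖^2 := pow_le_pow_left₀ hC0 hCle 2
      have hmle : crawford S ≤ ‖z‖ := by
        have : crawford S ≤ ‖z‖ := by
          apply csInf_le
          · exact ⟨0, by rintro r ⟨y, hy, rfl⟩; exact norm_nonneg _⟩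
          · exact ⟨x, hx, by rw [hz]⟩
        exact this
      nlinarith [hns, hfour, hCsq, hmle]
    -- step E : conclude
    have hm0 : 0 ≤ crawford S := by
      apply Real.sInf_nonneg
      rintro r ⟨y, hy, rfl⟩
      exact norm_nonneg _
    have hC0 : 0 ≤ lowerC (T^2) := by
      apply Real.sInf_nonneg
      rintro r ⟨y, φ, hy, rfl⟩
      exact norm_nonneg _
    set D0 : ℝ := w^4 - (1/4) * lowerC (T^2)^2 - (1/8) * crawford S with hD0def
    have hD0 : 0 ≤ D0 := by
      have := hD u hu
      have hPu : 0 ≤ (1/16) * ‖P u‖^2 := by positivity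
      rw [hD0def]
      linarith
    have hPle : ‖P‖ ≤ Real.sqrt (16 * D0) := by
      refine opNorm_le_unit (Real.sqrt_nonneg _) fun x hx => ?_
      have h1 := hD x hx
      have h2 : ‖P x‖^2 ≤ 16 * D0 := by
        rw [hD0def]; linarith
      have := Real.sqrt_le_sqrt h2
      rwa [Real.sqrt_sq (norm_nonneg _)] at this
    have hPsq : ‖P‖^2 ≤ 16 * D0 := by
      have h1 : ‖P‖^2 ≤ Real.sqrt (16 * D0)^2 := pow_le_pow_left₀ (norm_nonneg _) hPle 2
      rwa [Real.sq_sqrt (by linarith : (0:ℝ) ≤ 16 * D0)] at h1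
    rw [ge_iff_le, hD0def] at *
    linarith
end

section
/- For a bounded linear operator T on a complex Hilbert space, w(T)² ≥ (1/4)‖T*T + TT*‖. -/
open Complex
open scoped InnerProductSpace

variable {H : Type*} [NormedAddCommGroup H] [InnerProductSpace ℂ H] [CompleteSpace H]

lemma aux_sym_bound (S : H →L[ℂ] H)
    (hsym : ∀ x y : H, (inner ℂ (S x) y : ℂ) = inner ℂ x (S y))
    {M : ℝ} (hM : 0 ≤ M) (hb : ∀ x : H, ‖(inner ℂ (S x) x : ℂ)‖ ≤ M * ‖x‖ ^ 2) :
    ‖S‖ ≤ M := by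
  refine S.opNorm_le_bound hM fun x => ?_
  rcases eq_or_ne (S x) 0 with h | h
  · simp only [h, norm_zero]; positivity
  have hSx : (0:ℝ) < ‖S x‖ := norm_pos_iff.mpr h
  have hx : x ≠ 0 := by rintro rfl; simp at h
  have hxpos : (0:ℝ) < ‖x‖ := norm_pos_iff.mpr hx
  set c : ℝ := ‖x‖ / ‖S x‖ with hc
  have hcpos : 0 < c := div_pos hxpos hSx
  set y : H := (c : ℂ) • S x with hy
  have hyn : ‖y‖ = ‖x‖ := by
    rw [hy, norm_smul, Complex.norm_real, Real.norm_eq_abs, abs_of_pos hcpos, hc]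
    field_simp
  have hre : (inner ℂ (S x) y : ℂ).re = ‖x‖ * ‖S x‖ := by
    rw [hy, inner_smul_right]
    rw [@inner_self_eq_norm_sq_to_K ℂ]
    push_cast
    simp only [Complex.mul_re, Complex.ofReal_re, Complex.ofReal_im]
    norm_num [hc]
    norm_cast
    field_simp
  have e1 : (inner ℂ (S (x+y)) (x+y) : ℂ) - inner ℂ (S (x-y)) (x-y)
      = 2 * inner ℂ (S x) y + 2 * inner ℂ (S y) x := by
    simp only [map_add, map_sub, inner_add_left, inner_add_right, inner_sub_left,
      inner_sub_right]
    ring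
  have e2 : (inner ℂ (S y) x : ℂ) = starRingEnd ℂ (inner ℂ (S x) y) := by
    rw [hsym y x, ← inner_conj_symm]
  have e3 : ((inner ℂ (S (x+y)) (x+y) : ℂ) - inner ℂ (S (x-y)) (x-y)).re
      = 4 * (inner ℂ (S x) y : ℂ).re := by
    rw [e1, e2]
    have : ∀ z : ℂ, (2*z + 2*(starRingEnd ℂ z)).re = 4 * z.re := by
      intro z
      simp only [Complex.add_re, Complex.mul_re, Complex.conj_re, Complex.conj_im,
        Complex.re_ofNat, Complex.im_ofNat]
      ring
    exact this _
  have b1 : ((inner ℂ (S (x+y)) (x+y) : ℂ)).re ≤ M * ‖x+y‖^2 := by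
    have h3 := Complex.abs_re_le_norm (inner ℂ (S (x+y)) (x+y) : ℂ)
    have hb1 := hb (x+y)
    have := abs_le.mp (le_trans h3 hb1)
    linarith [this.2]
  have b2 : (-((inner ℂ (S (x-y)) (x-y) : ℂ)).re) ≤ M * ‖x-y‖^2 := by
    have h3 := Complex.abs_re_le_norm (inner ℂ (S (x-y)) (x-y) : ℂ)
    have hb2 := hb (x-y)
    have := abs_le.mp (le_trans h3 hb2)
    linarith [this.1]
  have par : ‖x+y‖^2 + ‖x-y‖^2 = 2*(‖x‖^2 + ‖y‖^2) := by
    have := parallelogram_law_with_norm ℂ x y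
    nlinarith [this]
  have : 4 * (‖x‖ * ‖S x‖) ≤ M * (2*(‖x‖^2 + ‖y‖^2)) := by
    rw [← hre, ← e3]
    rw [← par]
    have := b1
    have := b2
    simp only [Complex.sub_re]
    nlinarith
  rw [hyn] at this
  nlinarith

theorem stmt9 (T : H →L[ℂ] H) :
    numRadius T ^ 2 ≥ (1/4) * ‖star T * T + T * star T‖ := by
  set w := numRadius T with hw
  set Sst := {r : ℝ | ∃ x : H, ‖x‖ = 1 ∧ r = ‖(inner ℂ (T x) x : ℂ)‖} with hSst
  have hbdd : BddAbove Sst := by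
    refine ⟨‖T‖, ?_⟩
    rintro r ⟨x, hx, rfl⟩
    calc ‖(inner ℂ (T x) x : ℂ)‖ ≤ ‖T x‖ * ‖x‖ := norm_inner_le_norm _ _
      _ ≤ ‖T‖ * ‖x‖ * ‖x‖ := by
          have := T.le_opNorm x
          nlinarith [norm_nonneg (T x), norm_nonneg x, norm_nonneg T]
      _ = ‖T‖ := by rw [hx]; ring
  have hw0 : 0 ≤ w := Real.sSup_nonneg fun r hr => by
    obtain ⟨x, hx, rfl⟩ := hr; positivity
  -- pointwise bound
  have hwb : ∀ x : H, ‖(inner ℂ (T x) x : ℂ)‖ ≤ w * ‖x‖ ^ 2 := by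
    intro x
    rcases eq_or_ne x 0 with rfl | hx
    · simp
    · have hxp : (0:ℝ) < ‖x‖ := norm_pos_iff.mpr hx
      set u : H := ((‖x‖:ℝ) : ℂ)⁻¹ • x with hu
      have hun : ‖u‖ = 1 := by
        rw [hu, norm_smul, norm_inv, Complex.norm_real, Real.norm_eq_abs,
          abs_of_pos hxp]
        field_simp
      have hmem : ‖(inner ℂ (T u) u : ℂ)‖ ∈ Sst := ⟨u, hun, rfl⟩
      have hle := le_csSup hbdd hmem
      have hiu : ‖(inner ℂ (T u) u : ℂ)‖ = (‖x‖^2)⁻¹ * ‖(inner ℂ (T x) x : ℂ)‖ := by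
        rw [hu, map_smul, inner_smul_left, inner_smul_right, map_inv₀,
          Complex.conj_ofReal]
        simp only [norm_mul, norm_inv, Complex.norm_real, Real.norm_eq_abs,
          abs_of_pos hxp]
        rw [pow_two, mul_inv]
        ring
      rw [hiu] at hle
      calc ‖(inner ℂ (T x) x : ℂ)‖ = ‖x‖^2 * ((‖x‖^2)⁻¹ * ‖(inner ℂ (T x) x : ℂ)‖) := by
            field_simp
        _ ≤ ‖x‖^2 * w := by
            apply mul_le_mul_of_nonneg_left hle (by positivity)
        _ = w * ‖x‖^2 := by ring
  set A : H →L[ℂ] H := (2 : ℂ)⁻¹ • (T + star T) with hA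
  set B : H →L[ℂ] H := (2 * Complex.I)⁻¹ • (T - star T) with hB
  have hstar : ∀ x y : H, (inner ℂ ((star T) x) y : ℂ) = inner ℂ x (T y) := by
    intro x y
    rw [ContinuousLinearMap.star_eq_adjoint]
    exact ContinuousLinearMap.adjoint_inner_left T y x
  have hTad : ∀ x y : H, (inner ℂ (T x) y : ℂ) = inner ℂ x ((star T) y) := by
    intro x y
    rw [ContinuousLinearMap.star_eq_adjoint]
    exact (ContinuousLinearMap.adjoint_inner_right T x y).symm
  -- symmetry of A and B
  have hAsym : ∀ x y : H, (inner ℂ (A x) y : ℂ) = inner ℂ x (A y) := by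
    intro x y
    simp only [hA, ContinuousLinearMap.smul_apply, ContinuousLinearMap.add_apply,
      inner_smul_left, inner_smul_right, inner_add_left, inner_add_right]
    rw [hstar, hTad]
    have : starRingEnd ℂ (2:ℂ)⁻¹ = (2:ℂ)⁻¹ := by
      rw [map_inv₀, Complex.conj_ofNat]
    rw [this]
    ring
  have hBsym : ∀ x y : H, (inner ℂ (B x) y : ℂ) = inner ℂ x (B y) := by
    intro x y
    simp only [hB, ContinuousLinearMap.smul_apply, ContinuousLinearMap.sub_apply,
      inner_smul_left, inner_smul_right, inner_sub_left, inner_sub_right]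
    rw [hstar, hTad]
    have : starRingEnd ℂ (2 * Complex.I)⁻¹ = -(2 * Complex.I)⁻¹ := by
      rw [map_inv₀, map_mul, Complex.conj_ofNat, Complex.conj_I]
      rw [mul_neg, ← neg_inv]
    rw [this]
    ring
  -- quadratic form bounds for A, B
  have hconj : ∀ x : H, (inner ℂ ((star T) x) x : ℂ) = starRingEnd ℂ (inner ℂ (T x) x) := by
    intro x
    rw [hstar, ← inner_conj_symm]
  have hAb : ∀ x : H, ‖(inner ℂ (A x) x : ℂ)‖ ≤ w * ‖x‖ ^ 2 := by
    intro x
    have : (inner ℂ (A x) x : ℂ) = (2:ℂ)⁻¹ * (inner ℂ (T x) x + starRingEnd ℂ (inner ℂ (T x) x)) := by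
      simp only [hA, ContinuousLinearMap.smul_apply, ContinuousLinearMap.add_apply,
        inner_smul_left, inner_add_left]
      rw [hconj]
      have h2 : starRingEnd ℂ (2:ℂ)⁻¹ = (2:ℂ)⁻¹ := by
        rw [map_inv₀, Complex.conj_ofNat]
      rw [h2]
      try ring
    rw [this]
    calc ‖(2:ℂ)⁻¹ * ((inner ℂ (T x) x : ℂ) + starRingEnd ℂ (inner ℂ (T x) x))‖
        = 2⁻¹ * ‖(inner ℂ (T x) x : ℂ) + starRingEnd ℂ (inner ℂ (T x) x)‖ := by
          rw [norm_mul]; norm_num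
      _ ≤ 2⁻¹ * (‖(inner ℂ (T x) x : ℂ)‖ + ‖starRingEnd ℂ (inner ℂ (T x) x)‖) := by
          have := norm_add_le (inner ℂ (T x) x : ℂ) (starRingEnd ℂ (inner ℂ (T x) x))
          linarith
      _ = ‖(inner ℂ (T x) x : ℂ)‖ := by rw [RCLike.norm_conj]; ring
      _ ≤ w * ‖x‖ ^ 2 := hwb x
  have hBb : ∀ x : H, ‖(inner ℂ (B x) x : ℂ)‖ ≤ w * ‖x‖ ^ 2 := by
    intro x
    have : (inner ℂ (B x) x : ℂ) = (2*Complex.I)⁻¹ * (starRingEnd ℂ (inner ℂ (T x) x) - inner ℂ (T x) x) := by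
      simp only [hB, ContinuousLinearMap.smul_apply, ContinuousLinearMap.sub_apply,
        inner_smul_left, inner_sub_left]
      rw [hconj]
      have : starRingEnd ℂ (2 * Complex.I)⁻¹ = -(2 * Complex.I)⁻¹ := by
        rw [map_inv₀, map_mul, Complex.conj_ofNat, Complex.conj_I]
        rw [mul_neg, ← neg_inv]
      rw [this]
      try ring
    rw [this]
    calc ‖(2*Complex.I)⁻¹ * ((starRingEnd ℂ (inner ℂ (T x) x)) - (inner ℂ (T x) x : ℂ))‖
        = 2⁻¹ * ‖(starRingEnd ℂ (inner ℂ (T x) x)) - (inner ℂ (T x) x : ℂ)‖ := by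
          rw [norm_mul]; norm_num
      _ ≤ 2⁻¹ * (‖starRingEnd ℂ (inner ℂ (T x) x)‖ + ‖(inner ℂ (T x) x : ℂ)‖) := by
          have := norm_sub_le (starRingEnd ℂ (inner ℂ (T x) x)) (inner ℂ (T x) x : ℂ)
          linarith
      _ = ‖(inner ℂ (T x) x : ℂ)‖ := by rw [RCLike.norm_conj]; ring
      _ ≤ w * ‖x‖ ^ 2 := hwb x
  have hAn : ‖A‖ ≤ w := aux_sym_bound A hAsym hw0 hAb
  have hBn : ‖B‖ ≤ w := aux_sym_bound B hBsym hw0 hBb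
  -- pointwise decomposition T = A + I B, T* = A - I B
  have hTdec : ∀ x : H, T x = A x + Complex.I • B x := by
    intro x
    simp only [hA, hB, ContinuousLinearMap.smul_apply, ContinuousLinearMap.add_apply,
      ContinuousLinearMap.sub_apply, smul_smul]
    have h2 : Complex.I * (2 * Complex.I)⁻¹ = (2:ℂ)⁻¹ := by
      field_simp
    rw [h2]
    rw [smul_add, smul_sub]
    module
  have hTsdec : ∀ x : H, (star T) x = A x - Complex.I • B x := by
    intro x
    simp only [hA, hB, ContinuousLinearMap.smul_apply, ContinuousLinearMap.add_apply,
      ContinuousLinearMap.sub_apply, smul_smul]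
    have h2 : Complex.I * (2 * Complex.I)⁻¹ = (2:ℂ)⁻¹ := by
      field_simp
    rw [h2]
    rw [smul_add, smul_sub]
    module
  -- the operator S0
  set S0 : H →L[ℂ] H := star T * T + T * star T with hS0
  have hS0sym : ∀ x y : H, (inner ℂ (S0 x) y : ℂ) = inner ℂ x (S0 y) := by
    intro x y
    simp only [hS0, ContinuousLinearMap.add_apply, ContinuousLinearMap.mul_apply,
      inner_add_left, inner_add_right]
    rw [hstar (T x) y, hTad ((star T) x) y, ← hTad x (T y), ← hstar x ((star T) y)]
  have hS0b : ∀ x : H, ‖(inner ℂ (S0 x) x : ℂ)‖ ≤ (4 * w^2) * ‖x‖ ^ 2 := by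
    intro x
    have e : (inner ℂ (S0 x) x : ℂ) = ((‖T x‖^2 + ‖(star T) x‖^2 : ℝ) : ℂ) := by
      simp only [hS0, ContinuousLinearMap.add_apply, ContinuousLinearMap.mul_apply,
        inner_add_left]
      rw [hstar (T x) x, hTad ((star T) x) x]
      rw [@inner_self_eq_norm_sq_to_K ℂ, @inner_self_eq_norm_sq_to_K ℂ]
      norm_cast
    rw [e, Complex.norm_real, Real.norm_eq_abs,
      _root_.abs_of_nonneg (show (0:ℝ) ≤ ‖T x‖^2 + ‖(star T) x‖^2 by positivity)]
    -- parallelogram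
    have hpar : ‖T x‖^2 + ‖(star T) x‖^2 = 2 * (‖A x‖^2 + ‖Complex.I • B x‖^2) := by
      rw [hTdec x, hTsdec x]
      have := parallelogram_law_with_norm ℂ (A x) (Complex.I • B x)
      nlinarith [this]
    rw [hpar]
    have hIB : ‖Complex.I • B x‖ = ‖B x‖ := by
      rw [norm_smul, Complex.norm_I, one_mul]
    rw [hIB]
    have h1 : ‖A x‖ ≤ w * ‖x‖ := le_trans (A.le_opNorm x)
      (mul_le_mul_of_nonneg_right hAn (norm_nonneg x))
    have h2 : ‖B x‖ ≤ w * ‖x‖ := le_trans (B.le_opNorm x)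
      (mul_le_mul_of_nonneg_right hBn (norm_nonneg x))
    nlinarith [norm_nonneg (A x), norm_nonneg (B x), norm_nonneg x]
  have hfin : ‖S0‖ ≤ 4 * w^2 := aux_sym_bound S0 hS0sym (by positivity) hS0b
  rw [ge_iff_le]
  linarith
end
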